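/- arXiv:0710.2296 — 4 statements merged into one kernel-verified Lean document; each statement's English description precedes it below -/
import Mathlib

section
/- Let H = (V,E) be a graph with maximum degree at most D, where D ≥ 1. Then for every integer k ≥ 1, the number of subsets U ⊆ V with |U| = k such that the induced subgraph H[U] is connected is at most |V|·(D·e)^k / k, where e is Euler's number. -/
namespace CCS
variable {V : Type*} [DecidableEq V]

noncomputable def key (L : V → List V) (C : ℕ) (v : V) (s : List V) (w : V) : ℕ :=
  s.findIdx (fun u => decide (w ∈ L u)) * C
    + (L (s.getD (s.findIdx (fun u => decide (w ∈ L u))) v)).idxOf w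

noncomputable def cands (L : V → List V) (U : Finset V) (s : List V) : List V :=
  U.toList.filter (fun w => decide (w ∉ s) && s.any (fun u => decide (w ∈ L u)))

noncomputable def nxt (L : V → List V) (U : Finset V) (C : ℕ) (v : V) (s : List V) : V :=
  ((cands L U s).argmin (key L C v s)).getD v

noncomputable def gseq (L : V → List V) (U : Finset V) (C : ℕ) (v : V) : ℕ → List V
  | 0 => [v]
  | m + 1 => gseq L U C v m ++ [nxt L U C v (gseq L U C v m)]

noncomputable def code (L : V → List V) (U : Finset V) (C : ℕ) (v : V) (m : ℕ) : ℕ :=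
  key L C v (gseq L U C v m) (nxt L U C v (gseq L U C v m))

lemma mem_cands {L : V → List V} {U : Finset V} {s : List V} {w : V} :
    w ∈ cands L U s ↔ w ∈ U ∧ w ∉ s ∧ ∃ u ∈ s, w ∈ L u := by
  simp [cands, List.mem_filter, and_assoc]

lemma nxt_mem_cands {L : V → List V} {U : Finset V} {C : ℕ} {v : V} {s : List V}
    (h : cands L U s ≠ []) : nxt L U C v s ∈ cands L U s := by
  cases hh : (cands L U s).argmin (key L C v s) with
  | none => exact absurd (List.argmin_eq_none.1 hh) h
  | some a => rw [nxt, hh]; exact List.argmin_mem hh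

lemma nxt_min {L : V → List V} {U : Finset V} {C : ℕ} {v : V} {s : List V} {w : V}
    (h : cands L U s ≠ []) (hw : w ∈ cands L U s) :
    key L C v s (nxt L U C v s) ≤ key L C v s w := by
  cases hh : (cands L U s).argmin (key L C v s) with
  | none => exact absurd (List.argmin_eq_none.1 hh) h
  | some a => rw [nxt, hh]; exact List.le_of_mem_argmin hw hh

section keyspec
variable {L : V → List V} {C : ℕ} {v : V} {s : List V} {w : V}

lemma findIdx_lt (hw : ∃ u ∈ s, w ∈ L u) :
    s.findIdx (fun u => decide (w ∈ L u)) < s.length :=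
  List.findIdx_lt_length_of_exists (by simpa using hw)

lemma mem_nbr (hw : ∃ u ∈ s, w ∈ L u) :
    w ∈ L (s.getD (s.findIdx (fun u => decide (w ∈ L u))) v) := by
  have h1 := findIdx_lt (L := L) (w := w) hw
  rw [List.getD_eq_getElem _ _ h1]
  simpa using List.findIdx_getElem (w := h1)

lemma idx_lt (hC : ∀ u, (L u).length ≤ C) (hw : ∃ u ∈ s, w ∈ L u) :
    (L (s.getD (s.findIdx (fun u => decide (w ∈ L u))) v)).idxOf w < C :=
  lt_of_lt_of_le (List.idxOf_lt_length_iff.2 (mem_nbr hw)) (hC _)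

lemma key_lt (hC : ∀ u, (L u).length ≤ C) (hw : ∃ u ∈ s, w ∈ L u) :
    key L C v s w < s.length * C := by
  have h1 := findIdx_lt (L := L) (w := w) hw
  have h2 := idx_lt (v := v) hC hw
  calc key L C v s w < s.findIdx (fun u => decide (w ∈ L u)) * C + C :=
        Nat.add_lt_add_left h2 _
    _ = (s.findIdx (fun u => decide (w ∈ L u)) + 1) * C := by ring
    _ ≤ s.length * C := Nat.mul_le_mul_right _ h1

lemma key_div (hC : ∀ u, (L u).length ≤ C) (hw : ∃ u ∈ s, w ∈ L u) :
    key L C v s w / C = s.findIdx (fun u => decide (w ∈ L u)) ∧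
    key L C v s w % C = (L (s.getD (s.findIdx (fun u => decide (w ∈ L u))) v)).idxOf w := by
  have h2 := idx_lt (v := v) hC hw
  have hC0 : 0 < C := lt_of_le_of_lt (Nat.zero_le _) h2
  constructor
  · rw [key, Nat.mul_comm, Nat.mul_add_div hC0, Nat.div_eq_of_lt h2, Nat.add_zero]
  · rw [key, Nat.mul_comm, Nat.mul_add_mod, Nat.mod_eq_of_lt h2]

lemma key_decode (hC : ∀ u, (L u).length ≤ C) (hw : ∃ u ∈ s, w ∈ L u) :
    (L (s.getD (key L C v s w / C) v)).getD (key L C v s w % C) v = w := by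
  obtain ⟨h1, h2⟩ := key_div (v := v) hC hw
  rw [h1, h2, List.getD_eq_getElem, List.getElem_idxOf]
  exact List.idxOf_lt_length_iff.2 (mem_nbr hw)

lemma key_inj (hC : ∀ u, (L u).length ≤ C) {w' : V} (hw : ∃ u ∈ s, w ∈ L u)
    (hw' : ∃ u ∈ s, w' ∈ L u) (h : key L C v s w = key L C v s w') : w = w' := by
  have h1 := key_decode (v := v) hC hw
  rw [h, key_decode (v := v) hC hw'] at h1
  exact h1.symm

lemma key_stable (hw : ∃ u ∈ s, w ∈ L u) (t : List V) :
    key L C v (s ++ t) w = key L C v s w := by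
  have h1 := findIdx_lt (L := L) (w := w) hw
  have he : (s ++ t).findIdx (fun u => decide (w ∈ L u)) =
      s.findIdx (fun u => decide (w ∈ L u)) :=
    List.IsPrefix.findIdx_eq_of_findIdx_lt_length ⟨t, rfl⟩ h1
  rw [key, key, he, List.getD_append _ _ _ _ h1]

lemma key_new (hnot : ¬ ∃ u ∈ s, w ∈ L u) (t : List V) :
    s.length * C ≤ key L C v (s ++ t) w := by
  have hf : s.findIdx (fun u => decide (w ∈ L u)) = s.length :=
    List.findIdx_eq_length_of_false (by simpa using fun u hu => (by
      exact fun hm => hnot ⟨u, hu, hm⟩))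
  have he : s.length ≤ (s ++ t).findIdx (fun u => decide (w ∈ L u)) := by
    rw [List.findIdx_append, hf]
    split <;> omega
  calc s.length * C ≤ (s ++ t).findIdx (fun u => decide (w ∈ L u)) * C :=
        Nat.mul_le_mul_right _ he
    _ ≤ _ := Nat.le_add_right _ _
end keyspec
section main
variable {L : V → List V} {U : Finset V} {C : ℕ} {v : V}

lemma grow (hvU : v ∈ U)
    (hne : ∀ s : List V, v ∈ s → (∀ x ∈ s, x ∈ U) → s.length < U.card → cands L U s ≠ []) :
    ∀ m, m < U.card → (gseq L U C v m).length = m + 1 ∧ (gseq L U C v m).Nodup ∧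
      (∀ x ∈ gseq L U C v m, x ∈ U) ∧ v ∈ gseq L U C v m := by
  intro m
  induction m with
  | zero => intro _; simp [gseq, hvU]
  | succ m ih =>
    intro hm
    obtain ⟨h1, h2, h3, h4⟩ := ih (Nat.lt_of_succ_lt hm)
    have hcne : cands L U (gseq L U C v m) ≠ [] := hne _ h4 h3 (by omega)
    have hw := nxt_mem_cands (C := C) (v := v) hcne
    rw [mem_cands] at hw
    refine ⟨by simp [gseq, h1], ?_, ?_, ?_⟩
    · simp [gseq, List.nodup_append, h2, hw.2.1]; exact fun a ha h => hw.2.1 (h ▸ ha)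
    · intro x hx
      rw [gseq, List.mem_append] at hx
      rcases hx with hx | hx
      · exact h3 x hx
      · simp at hx; exact hx ▸ hw.1
    · rw [gseq]; exact List.mem_append_left _ h4

end main

section main
variable {L : V → List V} {U : Finset V} {C : ℕ} {v : V}
  (hC : ∀ u, (L u).length ≤ C) (hvU : v ∈ U)
  (hne : ∀ s : List V, v ∈ s → (∀ x ∈ s, x ∈ U) → s.length < U.card → cands L U s ≠ [])

include hvU hne

lemma cands_ne {m : ℕ} (hm : m + 1 < U.card) : cands L U (gseq L U C v m) ≠ [] := by
  obtain ⟨h1, _, h3, h4⟩ := grow (C := C) hvU hne m (Nat.lt_of_succ_lt hm)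
  exact hne _ h4 h3 (by omega)

include hC

lemma code_lt {m : ℕ} (hm : m + 1 < U.card) : code L U C v m < (m + 1) * C := by
  have hcne := cands_ne (C := C) hvU hne hm
  have hw := (mem_cands.1 (nxt_mem_cands (C := C) (v := v) hcne)).2.2
  have h1 := (grow (C := C) hvU hne m (Nat.lt_of_succ_lt hm)).1
  simpa [code, h1] using key_lt (v := v) hC hw

lemma gseq_decode {m : ℕ} (hm : m + 1 < U.card) :
    gseq L U C v (m + 1) = gseq L U C v m ++
      [(L ((gseq L U C v m).getD (code L U C v m / C) v)).getD (code L U C v m % C) v] := by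
  have hcne := cands_ne (C := C) hvU hne hm
  have hw := (mem_cands.1 (nxt_mem_cands (C := C) (v := v) hcne)).2.2
  rw [gseq]
  congr 1
  rw [code, key_decode hC hw]

lemma code_strict {m : ℕ} (hm : m + 2 < U.card) :
    code L U C v m < code L U C v (m + 1) := by
  have hcne := cands_ne (C := C) hvU hne (Nat.lt_of_succ_lt hm)
  have hcne' := cands_ne (C := C) hvU hne (m := m + 1) hm
  set s := gseq L U C v m with hs
  set w := nxt L U C v s with hwdef
  have hw := mem_cands.1 (nxt_mem_cands (C := C) (v := v) hcne)
  have hw' := mem_cands.1 (nxt_mem_cands (C := C) (v := v) hcne')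
  have hss : gseq L U C v (m + 1) = s ++ [w] := rfl
  set w' := nxt L U C v (gseq L U C v (m + 1)) with hw'def
  have hlen := (grow (C := C) hvU hne m (by omega)).1
  by_cases hnb : ∃ u ∈ s, w' ∈ L u
  · have hstab : code L U C v (m + 1) = key L C v s w' := by
      rw [code, ← hw'def, hss, key_stable hnb]
    have hwc : w' ∈ cands L U s := by
      refine mem_cands.2 ⟨hw'.1, ?_, hnb⟩
      intro hmem
      exact hw'.2.1 (by rw [hss]; exact List.mem_append_left _ hmem)
    have hle : key L C v s w ≤ key L C v s w' := nxt_min hcne hwc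
    have hne' : key L C v s w ≠ key L C v s w' := by
      intro heq
      have : w = w' := key_inj hC hw.2.2 hnb heq
      apply hw'.2.1
      rw [hss, ← this]
      simp
    have : code L U C v m = key L C v s w := rfl
    rw [this, hstab]
    exact lt_of_le_of_ne hle hne'
  · have h1 : s.length * C ≤ key L C v (s ++ [w]) w' := key_new hnb [w]
    have h2 : code L U C v m < s.length * C := by
      simpa [code] using key_lt (v := v) hC hw.2.2
    have : code L U C v (m + 1) = key L C v (s ++ [w]) w' := by rw [code, ← hw'def, hss]
    omega

lemma code_mono {i j : ℕ} (hij : i < j) (hj : j + 1 < U.card) :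
    code L U C v i < code L U C v j := by
  induction j with
  | zero => omega
  | succ j ih =>
    rcases Nat.lt_succ_iff_lt_or_eq.1 hij with h | h
    · exact (ih h (by omega)).trans (code_strict hC hvU hne (by omega))
    · exact h ▸ code_strict hC hvU hne (by omega)

end main

lemma card_le_choose (L : V → List V) (D k : ℕ) (v : V)
    (hC : ∀ u, (L u).length ≤ D) (hk : 1 ≤ k) (T : Finset (Finset V))
    (hT : ∀ U ∈ T, U.card = k ∧ v ∈ U ∧
      ∀ s : List V, v ∈ s → (∀ x ∈ s, x ∈ U) → s.length < k → cands L U s ≠ []) :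
    T.card ≤ (k * D).choose (k - 1) := by
  classical
  have hcard : ((Finset.range (k * D)).powersetCard (k - 1)).card = (k * D).choose (k - 1) := by
    rw [Finset.card_powersetCard, Finset.card_range]
  rw [← hcard]
  apply Finset.card_le_card_of_injOn
    (fun U => ((List.range (k - 1)).map (code L U D v)).toFinset)
  · -- maps into
    intro U hU
    obtain ⟨hUk, hvU, hne0⟩ := hT U hU
    have hne : ∀ s : List V, v ∈ s → (∀ x ∈ s, x ∈ U) → s.length < U.card →
        cands L U s ≠ [] := by rw [hUk]; exact hne0
    rw [Finset.mem_coe, Finset.mem_powersetCard]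
    constructor
    · intro x hx
      simp only [List.mem_toFinset, List.mem_map, List.mem_range] at hx
      obtain ⟨m, hm, rfl⟩ := hx
      have h1 : code L U D v m < (m + 1) * D := code_lt hC hvU hne (by omega)
      have : (m + 1) * D ≤ k * D := Nat.mul_le_mul_right _ (by omega)
      exact Finset.mem_range.2 (by omega)
    · have hpw : ((List.range (k - 1)).map (code L U D v)).Pairwise (· < ·) := by
        rw [List.pairwise_map]
        exact List.pairwise_lt_range.imp_of_mem (fun {a b} ha hb hab =>
          code_mono hC hvU hne hab (by rw [hUk]; simp at hb; omega))
      have hnd : ((List.range (k - 1)).map (code L U D v)).Nodup :=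
        hpw.imp (fun h => Nat.ne_of_lt h)
      rw [List.toFinset_card_of_nodup hnd, List.length_map, List.length_range]
  · -- injective
    intro U hU U' hU' heq
    simp only at heq
    obtain ⟨hUk, hvU, hne0⟩ := hT U hU
    obtain ⟨hUk', hvU', hne0'⟩ := hT U' hU'
    have hne : ∀ s : List V, v ∈ s → (∀ x ∈ s, x ∈ U) → s.length < U.card →
        cands L U s ≠ [] := by rw [hUk]; exact hne0
    have hne' : ∀ s : List V, v ∈ s → (∀ x ∈ s, x ∈ U') → s.length < U'.card →
        cands L U' s ≠ [] := by rw [hUk']; exact hne0'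
    have hpw : ((List.range (k - 1)).map (code L U D v)).Pairwise (· < ·) := by
      rw [List.pairwise_map]
      exact List.pairwise_lt_range.imp_of_mem (fun {a b} ha hb hab =>
        code_mono hC hvU hne hab (by rw [hUk]; simp at hb; omega))
    have hpw' : ((List.range (k - 1)).map (code L U' D v)).Pairwise (· < ·) := by
      rw [List.pairwise_map]
      exact List.pairwise_lt_range.imp_of_mem (fun {a b} ha hb hab =>
        code_mono hC hvU' hne' hab (by rw [hUk']; simp at hb; omega))
    have hnd : ((List.range (k - 1)).map (code L U D v)).Nodup :=
      hpw.imp (fun h => Nat.ne_of_lt h)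
    have hnd' : ((List.range (k - 1)).map (code L U' D v)).Nodup :=
      hpw'.imp (fun h => Nat.ne_of_lt h)
    haveI : IsAntisymm ℕ (· < ·) := ⟨fun a b h h' => absurd h (lt_asymm h')⟩
    have hleq : (List.range (k - 1)).map (code L U D v) =
        (List.range (k - 1)).map (code L U' D v) :=
      List.Perm.eq_of_pairwise (fun a b _ _ h h' => absurd h (lt_asymm h')) hpw hpw'
        (List.perm_of_nodup_nodup_toFinset_eq hnd hnd' heq)
    have hcodes : ∀ m, m < k - 1 → code L U D v m = code L U' D v m := by
      intro m hm
      have h1 := List.getElem_of_eq hleq (i := m) (by simpa using hm)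
      simpa using h1
    have hg : ∀ m, m ≤ k - 1 → gseq L U D v m = gseq L U' D v m := by
      intro m
      induction m with
      | zero => intro _; rfl
      | succ m ih =>
        intro hm
        have h1 : m < k - 1 := by omega
        rw [gseq_decode hC hvU hne (by omega), gseq_decode hC hvU' hne' (by omega),
          ih (by omega), hcodes m h1]
    have hfin : ∀ (W : Finset V), W.card = k → v ∈ W →
        (∀ s : List V, v ∈ s → (∀ x ∈ s, x ∈ W) → s.length < W.card → cands L W s ≠ []) →
        (gseq L W D v (k - 1)).toFinset = W := by
      intro W hWk hvW hneW
      obtain ⟨h1, h2, h3, _⟩ := grow (C := D) hvW hneW (k - 1) (by omega)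
      apply Finset.eq_of_subset_of_card_le
      · intro x hx
        exact h3 x (List.mem_toFinset.1 hx)
      · rw [List.toFinset_card_of_nodup h2, h1, hWk]
        omega
    rw [← hfin U hUk hvU (by rw [hUk]; exact hne0), ← hfin U' hUk' hvU' (by rw [hUk']; exact hne0'),
      hg (k - 1) le_rfl]
end CCS

lemma exists_adj_boundary {V : Type*} (H : SimpleGraph V) (Us : Set V)
    (hconn : (H.induce Us).Connected) {v x : V} (hv : v ∈ Us) (hx : x ∈ Us)
    (S : Set V) (hvS : v ∈ S) (hxS : x ∉ S) :
    ∃ a b, a ∈ S ∧ b ∈ Us ∧ b ∉ S ∧ H.Adj a b := by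
  suffices h : ∀ (y z : Us), (H.induce Us).Walk y z → (y : V) ∈ S → (z : V) ∉ S →
      ∃ a b, a ∈ S ∧ b ∈ Us ∧ b ∉ S ∧ H.Adj a b by
    obtain ⟨p⟩ := hconn.preconnected ⟨v, hv⟩ ⟨x, hx⟩
    exact h _ _ p hvS hxS
  intro y z p
  induction p with
  | nil => intro h1 h2; exact absurd h1 h2
  | @cons a b c hab p ih =>
    intro h1 h2
    by_cases hb : (b : V) ∈ S
    · exact ih hb h2
    · exact ⟨a, b, h1, b.2, hb, by simpa using hab⟩

theorem count_connected_subsets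
    {V : Type*} [Fintype V] (H : SimpleGraph V) (D : ℕ) (hD : 1 ≤ D)
    (hdeg : ∀ v : V, (H.neighborSet v).ncard ≤ D) (k : ℕ) (hk : 1 ≤ k) :
    (Nat.card {U : Finset V // U.card = k ∧ (H.induce (↑U : Set V)).Connected} : ℝ) ≤
      (Fintype.card V : ℝ) * (D * Real.exp 1) ^ k / k := by
  classical
  letI : LinearOrder V := LinearOrder.lift' (Fintype.equivFin V) (Equiv.injective _)
  letI : DecidableRel H.Adj := fun a b => Classical.dec _
  set n := Fintype.card V with hn
  set L : V → List V := fun u => (H.neighborFinset u).sort (· ≤ ·) with hL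
  have hmemL : ∀ u w : V, w ∈ L u ↔ H.Adj u w := by
    intro u w
    rw [hL]
    simp [Finset.mem_sort, SimpleGraph.mem_neighborFinset]
  have hC : ∀ u, (L u).length ≤ D := by
    intro u
    rw [hL]
    simp only [Finset.length_sort]
    have : (H.neighborFinset u).card = (H.neighborSet u).ncard := by
      rw [SimpleGraph.neighborFinset_def, Set.ncard_eq_toFinset_card']
    rw [this]
    exact hdeg u
  set T : Finset (Finset V) :=
    Finset.univ.filter (fun U : Finset V => U.card = k ∧ (H.induce (↑U : Set V)).Connected)
    with hT
  -- step 1 : LHS = T.card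
  have h1 : Nat.card {U : Finset V // U.card = k ∧ (H.induce (↑U : Set V)).Connected} = T.card := by
    rw [Nat.card_eq_fintype_card, hT]
    convert Fintype.card_subtype _
  -- step 2 : double counting
  have h2 : k * T.card = ∑ v : V, (T.filter (fun U => v ∈ U)).card := by
    have e1 : ∑ v : V, (T.filter (fun U => v ∈ U)).card
        = ∑ v : V, ∑ U ∈ T, if v ∈ U then 1 else 0 :=
      Finset.sum_congr rfl fun v _ => Finset.card_filter _ _
    rw [e1, Finset.sum_comm]
    have e2 : ∀ U ∈ T, (∑ v : V, if v ∈ U then 1 else 0) = k := by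
      intro U hU
      have hUk : U.card = k := ((Finset.mem_filter.1 hU).2).1
      simp [Finset.sum_ite_mem, hUk]
    rw [Finset.sum_congr rfl e2]
    simp [mul_comm]
  -- step 3 : per-vertex bound
  have h3 : ∀ v : V, (T.filter (fun U => v ∈ U)).card ≤ (k * D).choose (k - 1) := by
    intro v
    apply CCS.card_le_choose L D k v hC hk
    intro U hU
    rw [Finset.mem_filter] at hU
    obtain ⟨hUT, hvU⟩ := hU
    rw [hT, Finset.mem_filter] at hUT
    obtain ⟨-, hUk, hUconn⟩ := hUT
    refine ⟨hUk, hvU, ?_⟩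
    intro s hvs hsU hslen
    have hx : ∃ x ∈ U, x ∉ s := by
      by_contra hcon
      push_neg at hcon
      have hsub : U ⊆ s.toFinset := fun x hx => List.mem_toFinset.2 (hcon x hx)
      have h6 := Finset.card_le_card hsub
      have h7 := s.toFinset_card_le
      omega
    obtain ⟨x, hxU, hxs⟩ := hx
    obtain ⟨a, b, haS, hbU, hbS, hadj⟩ := exists_adj_boundary H (↑U : Set V) hUconn
      (Finset.mem_coe.2 hvU) (Finset.mem_coe.2 hxU) {y | y ∈ s} hvs hxs
    have : b ∈ CCS.cands L U s :=
      CCS.mem_cands.2 ⟨Finset.mem_coe.1 hbU, hbS, ⟨a, haS, (hmemL a b).2 hadj⟩⟩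
    exact List.ne_nil_of_mem this
  -- step 4 : numeric
  have h4 : (k : ℝ) * T.card ≤ (n : ℝ) * ((k * D).choose (k - 1)) := by
    have hsum : ∑ v : V, (T.filter (fun U => v ∈ U)).card ≤ n * ((k * D).choose (k - 1)) := by
      calc ∑ v : V, (T.filter (fun U => v ∈ U)).card
          ≤ ∑ _v : V, (k * D).choose (k - 1) := Finset.sum_le_sum (fun v _ => h3 v)
        _ = n * ((k * D).choose (k - 1)) := by simp [hn, mul_comm]
    have := h2 ▸ hsum
    exact_mod_cast this
  have hkpos : (0 : ℝ) < k := by exact_mod_cast hk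
  have hk1 : k - 1 + 1 = k := by omega
  -- choose ≤ (D e)^k
  have h5 : (((k * D).choose (k - 1) : ℕ) : ℝ) ≤ (D * Real.exp 1) ^ k := by
    have e1 : (((k * D).choose (k - 1) : ℕ) : ℝ) ≤
        (((k * D) : ℕ) : ℝ) ^ (k - 1) / ((Nat.factorial (k - 1) : ℕ) : ℝ) :=
      Nat.choose_le_pow_div (k - 1) (k * D)
    have hfacpos : (0 : ℝ) < ((Nat.factorial (k - 1) : ℕ) : ℝ) := by
      exact_mod_cast Nat.factorial_pos (k - 1)
    have hfacpos' : (0 : ℝ) < ((Nat.factorial k : ℕ) : ℝ) := by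
      exact_mod_cast Nat.factorial_pos k
    have hfacs : ((Nat.factorial k : ℕ) : ℝ) = (k : ℝ) * ((Nat.factorial (k - 1) : ℕ) : ℝ) := by
      have : Nat.factorial k = k * Nat.factorial (k - 1) := by
        conv_lhs => rw [← hk1]
        rw [Nat.factorial_succ, hk1]
      exact_mod_cast congrArg (fun m : ℕ => (m : ℝ)) this
    have hkpow : ((k : ℝ)) ^ k = (k : ℝ) ^ (k - 1) * k := by
      conv_lhs => rw [← hk1]
      rw [pow_succ, hk1]
    have e3 : (k : ℝ) ^ k / ((Nat.factorial k : ℕ) : ℝ) ≤ Real.exp 1 ^ k := by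
      rw [Real.exp_one_pow]
      have hterm : (k : ℝ) ^ k / ((Nat.factorial k : ℕ) : ℝ)
          ≤ ∑ i ∈ Finset.range (k + 1), (k : ℝ) ^ i / (Nat.factorial i : ℝ) := by
        apply Finset.single_le_sum (f := fun i => (k : ℝ) ^ i / (Nat.factorial i : ℝ))
        · intro i _
          positivity
        · simp
      exact hterm.trans (Real.sum_le_exp_of_nonneg (by positivity) (k + 1))
    have e2 : (((k * D) : ℕ) : ℝ) ^ (k - 1) / ((Nat.factorial (k - 1) : ℕ) : ℝ)
        = ((k : ℝ) ^ k / ((Nat.factorial k : ℕ) : ℝ)) * (D : ℝ) ^ (k - 1) := by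
      push_cast
      rw [mul_pow, hkpow, hfacs]
      field_simp
    have e4 : (D : ℝ) ^ (k - 1) ≤ (D : ℝ) ^ k := by
      apply pow_le_pow_right₀ (by exact_mod_cast hD)
      omega
    calc (((k * D).choose (k - 1) : ℕ) : ℝ)
        ≤ ((k : ℝ) ^ k / ((Nat.factorial k : ℕ) : ℝ)) * (D : ℝ) ^ (k - 1) := by
          rw [← e2]; exact e1
      _ ≤ Real.exp 1 ^ k * (D : ℝ) ^ k :=
          mul_le_mul e3 e4 (by positivity) (by positivity)
      _ = (D * Real.exp 1) ^ k := by rw [mul_pow]; ring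
  rw [h1, le_div_iff₀ hkpos]
  calc (T.card : ℝ) * k = k * T.card := by ring
    _ ≤ (n : ℝ) * ((k * D).choose (k - 1)) := h4
    _ ≤ (n : ℝ) * (D * Real.exp 1) ^ k := by
        apply mul_le_mul_of_nonneg_left h5 (by positivity)
end

section
/- Fix constants α > 0, c > 0, an integer Δ ≥ 1, and a function f on the positive integers with f(k) ≥ c for all k, and let K = min{u : for every k ≥ u, k·f(k) > 1/α}. For every ε > 0 there exists n₀ such that for every n ≥ n₀ and every graph G on n vertices with maximum degree at most Δ that is an f-expander, with probability at least 1 − ε under the deletion process with parameter α, every connected component of Ĝ other than the largest one has at most K − 1 vertices. -/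
open MeasureTheory

noncomputable def bern (p : ENNReal) : Measure Bool :=
  (PMF.bernoulli (min p 1).toNNReal
    (ENNReal.toNNReal_mono ENNReal.one_ne_top (min_le_right _ _))).toMeasure

noncomputable def delMeasure (n : ℕ) (α : ℝ) : Measure (Fin n → Bool) :=
  Measure.pi fun _ => bern (ENNReal.ofReal ((n : ℝ) ^ (-α)))

def survivors {n : ℕ} (ω : Fin n → Bool) : Set (Fin n) := {v | ω v = false}

def nbhd {V : Type*} (H : SimpleGraph V) (U : Set V) : Set V :=
  {v | v ∉ U ∧ ∃ u ∈ U, H.Adj u v}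

def IsBetaExpander {V : Type*} (H : SimpleGraph V) (β : ℝ) : Prop :=
  ∀ U : Set V, U.Nonempty → (U.ncard : ℝ) ≤ (Nat.card V : ℝ) / 2 →
    β * U.ncard ≤ ((nbhd H U).ncard : ℝ)

def IsFExpander {V : Type*} (H : SimpleGraph V) (f : ℕ → ℝ) : Prop :=
  ∀ U : Set V, U.Nonempty → (U.ncard : ℝ) ≤ (Nat.card V : ℝ) / 2 →
    f U.ncard * U.ncard ≤ ((nbhd H U).ncard : ℝ)

noncomputable def Kconst (α : ℝ) (f : ℕ → ℝ) : ℕ :=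
  sInf {u : ℕ | 1 ≤ u ∧ ∀ k : ℕ, u ≤ k → 1 / α < (k : ℝ) * f k}

/-! ### Auxiliary lemmas -/

section Aux

instance bern_prob (p : ENNReal) : IsProbabilityMeasure (bern p) := by
  unfold bern; infer_instance

lemma bern_true (p : ENNReal) : bern p {true} = min p 1 := by
  rw [bern, PMF.toMeasure_apply_singleton _ _ (measurableSet_singleton _)]
  exact (PMF.bernoulli_apply ..).trans
    (ENNReal.coe_toNNReal (ne_top_of_le_ne_top ENNReal.one_ne_top (min_le_right _ _)))

instance delMeasure_prob (n : ℕ) (α : ℝ) : IsProbabilityMeasure (delMeasure n α) := by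
  unfold delMeasure; infer_instance

lemma delMeasure_allTrue (n : ℕ) (α : ℝ) (W : Finset (Fin n)) :
    delMeasure n α {ω | ∀ v ∈ W, ω v = true}
      = (min (ENNReal.ofReal ((n:ℝ) ^ (-α))) 1) ^ W.card := by
  have hset : {ω : Fin n → Bool | ∀ v ∈ W, ω v = true}
      = Set.pi Set.univ (fun v => if v ∈ W then ({true} : Set Bool) else Set.univ) := by
    ext ω
    simp only [Set.mem_setOf_eq, Set.mem_pi, Set.mem_univ, forall_true_left]
    constructor
    · intro h v; by_cases hv : v ∈ W <;> simp [hv, h v]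
    · intro h v hv; have := h v; simp [hv] at this; exact this
  rw [delMeasure, hset, Measure.pi_pi]
  have : ∀ i : Fin n, (bern (ENNReal.ofReal ((n:ℝ) ^ (-α)))) (if i ∈ W then ({true}:Set Bool) else Set.univ)
      = if i ∈ W then (min (ENNReal.ofReal ((n:ℝ) ^ (-α))) 1) else 1 := by
    intro i; by_cases hi : i ∈ W
    · simp [hi, bern_true]
    · simp only [hi, if_false]; exact measure_univ
  simp only [this]
  rw [Finset.prod_ite_mem, Finset.univ_inter, Finset.prod_const]

/-- minimal length of a walk from u to y with support inside U -/
noncomputable def wdist {V : Type*} (G : SimpleGraph V) (U : Set V) (u y : V) : ℕ :=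
  sInf {ℓ : ℕ | ∃ p : G.Walk u y, (∀ z ∈ p.support, z ∈ U) ∧ p.length = ℓ}

lemma wdist_exists {V : Type*} {G : SimpleGraph V} {U : Set V} {u y : V}
    (h : ∃ p : G.Walk u y, ∀ z ∈ p.support, z ∈ U) :
    ∃ p : G.Walk u y, (∀ z ∈ p.support, z ∈ U) ∧ p.length = wdist G U u y := by
  obtain ⟨p, hp⟩ := h
  have hne : {ℓ : ℕ | ∃ p : G.Walk u y, (∀ z ∈ p.support, z ∈ U) ∧ p.length = ℓ}.Nonempty :=
    ⟨p.length, p, hp, rfl⟩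
  exact Nat.sInf_mem hne

lemma wdist_le {V : Type*} {G : SimpleGraph V} {U : Set V} {u y : V}
    (p : G.Walk u y) (hp : ∀ z ∈ p.support, z ∈ U) :
    wdist G U u y ≤ p.length :=
  Nat.sInf_le ⟨p, hp, rfl⟩

theorem exists_spanning_closed_walk {V : Type*} [DecidableEq V] {G : SimpleGraph V}
    (U : Finset V) (hne : U.Nonempty)
    (hconn : ∀ x ∈ U, ∀ y ∈ U, ∃ p : G.Walk x y, ∀ z ∈ p.support, z ∈ (U : Set V)) :
    ∃ u ∈ U, ∃ p : G.Walk u u,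
      (∀ z, z ∈ p.support ↔ z ∈ U) ∧ p.length ≤ 2 * (U.card - 1) := by
  classical
  induction U using Finset.strongInduction with
  | _ U ih =>
  obtain ⟨u, hu⟩ := hne
  by_cases hcard : U.card ≤ 1
  · have hU : U = {u} := by
      apply Finset.eq_singleton_iff_unique_mem.mpr
      exact ⟨hu, fun x hx => by
        by_contra hne'
        have : 2 ≤ U.card := Finset.one_lt_card.mpr ⟨x, hx, u, hu, hne'⟩
        omega⟩
    refine ⟨u, hu, SimpleGraph.Walk.nil, ?_, by simp⟩
    intro z; subst hU; simp [SimpleGraph.Walk.support_nil]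
  · push_neg at hcard
    have herase : (U.erase u).Nonempty := by
      rw [← Finset.card_pos, Finset.card_erase_of_mem hu]; omega
    obtain ⟨v, hvmem, hvmax⟩ := Finset.exists_max_image (U.erase u) (wdist G (U:Set V) u) herase
    have hvU : v ∈ U := Finset.mem_of_mem_erase hvmem
    have hvu : v ≠ u := Finset.ne_of_mem_erase hvmem
    obtain ⟨pv, hpvsupp, hpvlen⟩ := wdist_exists (hconn u hu v hvU)
    have hpvpos : 0 < pv.length := by
      rcases Nat.eq_zero_or_pos pv.length with h0 | h
      · exact absurd (SimpleGraph.Walk.eq_of_length_eq_zero h0).symm hvu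
      · exact h
    have claimA : ∀ y ∈ U, y ≠ v →
        ∃ p : G.Walk u y, ∀ z ∈ p.support, z ∈ ((U.erase v : Finset V) : Set V) := by
      intro y hy hyv
      obtain ⟨p, hpsupp, hplen⟩ := wdist_exists (hconn u hu y hy)
      by_cases hvp : v ∈ p.support
      · exfalso
        have hq := p.support_takeUntil_subset hvp
        have hdv : wdist G (U:Set V) u v ≤ (p.takeUntil v hvp).length :=
          wdist_le _ (fun z hz => hpsupp z (hq hz))
        have hsplit : (p.takeUntil v hvp).length + (p.dropUntil v hvp).length = p.length := by
          rw [← SimpleGraph.Walk.length_append, p.take_spec hvp]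
        have hdroppos : 0 < (p.dropUntil v hvp).length := by
          rcases Nat.eq_zero_or_pos (p.dropUntil v hvp).length with h0 | h
          · exact absurd (SimpleGraph.Walk.eq_of_length_eq_zero h0) hyv.symm
          · exact h
        have hyle : wdist G (U:Set V) u y ≤ wdist G (U:Set V) u v := by
          by_cases hyu : y = u
          · have h0 : wdist G (U:Set V) u y ≤ 0 := by
              subst hyu
              exact wdist_le SimpleGraph.Walk.nil (by simp [hu])
            omega
          · exact hvmax y (Finset.mem_erase.mpr ⟨hyu, hy⟩)
        omega
      · refine ⟨p, fun z hz => ?_⟩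
        have hzU := hpsupp z hz
        have hzv : z ≠ v := fun h => hvp (h ▸ hz)
        simp only [Finset.coe_erase, Set.mem_diff, Set.mem_singleton_iff]
        exact ⟨hzU, hzv⟩
    have hconn' : ∀ x ∈ U.erase v, ∀ y ∈ U.erase v,
        ∃ p : G.Walk x y, ∀ z ∈ p.support, z ∈ ((U.erase v : Finset V) : Set V) := by
      intro x hx y hy
      obtain ⟨px, hpx⟩ := claimA x (Finset.mem_of_mem_erase hx) (Finset.ne_of_mem_erase hx)
      obtain ⟨py, hpy⟩ := claimA y (Finset.mem_of_mem_erase hy) (Finset.ne_of_mem_erase hy)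
      refine ⟨px.reverse.append py, fun z hz => ?_⟩
      rw [SimpleGraph.Walk.mem_support_append_iff] at hz
      rcases hz with hz | hz
      · exact hpx z (by rwa [SimpleGraph.Walk.support_reverse, List.mem_reverse] at hz)
      · exact hpy z hz
    have herasess : U.erase v ⊂ U := Finset.erase_ssubset hvU
    have herase2 : (U.erase v).Nonempty := ⟨u, Finset.mem_erase.mpr ⟨Ne.symm hvu, hu⟩⟩
    obtain ⟨u', hu'mem, w, hwsupp, hwlen⟩ := ih (U.erase v) herasess herase2 hconn'
    obtain ⟨x, hadj, q, hq⟩ := SimpleGraph.Walk.exists_eq_cons_of_ne hvu pv.reverse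
    have hxU : x ∈ U := by
      have : x ∈ pv.reverse.support := by rw [hq]; simp
      rw [SimpleGraph.Walk.support_reverse, List.mem_reverse] at this
      exact hpvsupp x this
    have hxv : x ≠ v := fun h => G.irrefl (h ▸ hadj)
    have hxmem : x ∈ U.erase v := Finset.mem_erase.mpr ⟨hxv, hxU⟩
    have hxw : x ∈ w.support := (hwsupp x).mpr hxmem
    let w1 : G.Walk u' u' := (w.takeUntil x hxw).append
      (SimpleGraph.Walk.cons (hadj.symm) (SimpleGraph.Walk.cons hadj (w.dropUntil x hxw)))
    refine ⟨u', Finset.mem_of_mem_erase hu'mem, w1, ?_, ?_⟩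
    · intro z
      have hsplit : z ∈ (w.takeUntil x hxw).support ∨ z ∈ (w.dropUntil x hxw).support ↔
          z ∈ w.support := by
        conv_rhs => rw [← w.take_spec hxw]
        rw [SimpleGraph.Walk.mem_support_append_iff]
      constructor
      · intro hz
        rw [SimpleGraph.Walk.mem_support_append_iff] at hz
        rcases hz with hz | hz
        · exact Finset.mem_of_mem_erase ((hwsupp z).mp (hsplit.mp (Or.inl hz)))
        · rw [SimpleGraph.Walk.support_cons, List.mem_cons] at hz
          rcases hz with rfl | hz
          · exact hxU
          rw [SimpleGraph.Walk.support_cons, List.mem_cons] at hz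
          rcases hz with rfl | hz
          · exact hvU
          · exact Finset.mem_of_mem_erase ((hwsupp z).mp (hsplit.mp (Or.inr hz)))
      · intro hz
        by_cases hzv : z = v
        · subst hzv
          rw [SimpleGraph.Walk.mem_support_append_iff]
          right; rw [SimpleGraph.Walk.support_cons]; simp
        · have : z ∈ w.support := (hwsupp z).mpr (Finset.mem_erase.mpr ⟨hzv, hz⟩)
          rw [SimpleGraph.Walk.mem_support_append_iff]
          rcases hsplit.mpr this with h | h
          · exact Or.inl h
          · right; rw [SimpleGraph.Walk.support_cons]; right
            rw [SimpleGraph.Walk.support_cons]; right; exact h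
    · have hlen1 : w1.length = w.length + 2 := by
        have : (w.takeUntil x hxw).length + (w.dropUntil x hxw).length = w.length := by
          rw [← SimpleGraph.Walk.length_append, w.take_spec hxw]
        simp only [w1, SimpleGraph.Walk.length_append, SimpleGraph.Walk.length_cons]
        omega
      have hcard' : (U.erase v).card = U.card - 1 := Finset.card_erase_of_mem hvU
      omega

open SimpleGraph Finset in
lemma count_walks_from {n Δ : ℕ} (G : SimpleGraph (Fin n)) [DecidableRel G.Adj]
    (hdeg : ∀ v : Fin n, (G.degree v) ≤ Δ) :
    ∀ (ℓ : ℕ) (u : Fin n), (∑ v : Fin n, (G.finsetWalkLength ℓ u v).card) ≤ Δ ^ ℓ := by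
  intro ℓ
  induction ℓ with
  | zero =>
    intro u
    have : ∀ v : Fin n, (G.finsetWalkLength 0 u v).card = if u = v then 1 else 0 := by
      intro v
      by_cases h : u = v
      · subst h; simp [finsetWalkLength]
      · simp [finsetWalkLength, h]
    simp only [this]
    simp
  | succ ℓ ih =>
    intro u
    have hcard : ∀ v : Fin n, (G.finsetWalkLength (ℓ+1) u v).card ≤
        ∑ w : G.neighborSet u, (G.finsetWalkLength ℓ w v).card := by
      intro v
      calc (G.finsetWalkLength (ℓ+1) u v).card
          ≤ ∑ w : G.neighborSet u, ((G.finsetWalkLength ℓ w v).map _).card :=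
            Finset.card_biUnion_le
        _ = ∑ w : G.neighborSet u, (G.finsetWalkLength ℓ w v).card := by
            simp [Finset.card_map]
    calc (∑ v : Fin n, (G.finsetWalkLength (ℓ+1) u v).card)
        ≤ ∑ v : Fin n, ∑ w : G.neighborSet u, (G.finsetWalkLength ℓ w v).card :=
          Finset.sum_le_sum (fun v _ => hcard v)
      _ = ∑ w : G.neighborSet u, ∑ v : Fin n, (G.finsetWalkLength ℓ w v).card :=
          Finset.sum_comm
      _ ≤ ∑ _w : G.neighborSet u, Δ ^ ℓ := Finset.sum_le_sum (fun w _ => ih w)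
      _ = (G.degree u) * Δ ^ ℓ := by
          rw [Finset.sum_const, smul_eq_mul, Finset.card_univ,
            SimpleGraph.card_neighborSet_eq_degree]
      _ ≤ Δ * Δ ^ ℓ := Nat.mul_le_mul_right _ (hdeg u)
      _ = Δ ^ (ℓ+1) := by ring

open SimpleGraph Finset in
lemma count_closed_walks_le {n Δ : ℕ} (G : SimpleGraph (Fin n)) [DecidableRel G.Adj]
    (hdeg : ∀ v : Fin n, (G.degree v) ≤ Δ) (hΔ : 1 ≤ Δ) (L : ℕ) :
    (Finset.univ.sigma (fun u : Fin n => G.finsetWalkLengthLT (L+1) u u)).card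
      ≤ n * ((L+1) * Δ ^ L) := by
  rw [Finset.card_sigma]
  have hbound : ∀ u : Fin n, (G.finsetWalkLengthLT (L+1) u u).card ≤ (L+1) * Δ ^ L := by
    intro u
    rw [show (G.finsetWalkLengthLT (L+1) u u).card
        = ∑ ℓ ∈ Finset.range (L+1), (G.finsetWalkLength ℓ u u).card from Finset.card_disjiUnion _ _ _]
    calc ∑ ℓ ∈ Finset.range (L+1), (G.finsetWalkLength ℓ u u).card
        ≤ ∑ ℓ ∈ Finset.range (L+1), Δ ^ ℓ := by
          refine Finset.sum_le_sum (fun ℓ _ => ?_)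
          calc (G.finsetWalkLength ℓ u u).card
              ≤ ∑ v : Fin n, (G.finsetWalkLength ℓ u v).card :=
                Finset.single_le_sum (f := fun v => (G.finsetWalkLength ℓ u v).card)
                  (fun v _ => Nat.zero_le _) (Finset.mem_univ u)
            _ ≤ Δ ^ ℓ := count_walks_from G hdeg ℓ u
      _ ≤ ∑ _ℓ ∈ Finset.range (L+1), Δ ^ L := by
          refine Finset.sum_le_sum (fun ℓ hℓ => Nat.pow_le_pow_right hΔ ?_)
          exact Nat.lt_succ_iff.mp (Finset.mem_range.mp hℓ)
      _ = (L+1) * Δ ^ L := by simp [Finset.sum_const, Finset.card_range]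
  calc ∑ u : Fin n, (G.finsetWalkLengthLT (L+1) u u).card
      ≤ ∑ _u : Fin n, (L+1) * Δ ^ L := Finset.sum_le_sum (fun u _ => hbound u)
    _ = n * ((L+1) * Δ ^ L) := by simp [Finset.sum_const, Finset.card_univ]

open SimpleGraph Finset Classical in
lemma connFamily_card_le {n Δ : ℕ} (G : SimpleGraph (Fin n)) [DecidableRel G.Adj]
    (hdeg : ∀ v : Fin n, (G.degree v) ≤ Δ) (hΔ : 1 ≤ Δ) (hn : 0 < n) (k : ℕ) :
    (Finset.univ.filter (fun U : Finset (Fin n) =>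
        ∃ u, ∃ p : G.Walk u u, p.support.toFinset = U ∧ p.length ≤ 2*(k-1))).card
      ≤ n * ((2*(k-1)+1) * Δ ^ (2*(k-1))) := by
  set L := 2*(k-1) with hL
  have : (Finset.univ.filter (fun U : Finset (Fin n) =>
        ∃ u, ∃ p : G.Walk u u, p.support.toFinset = U ∧ p.length ≤ L)).card
      ≤ (Finset.univ.sigma (fun u : Fin n => G.finsetWalkLengthLT (L+1) u u)).card := by
    apply Finset.card_le_card_of_injOn
      (fun U => if h : ∃ u, ∃ p : G.Walk u u, p.support.toFinset = U ∧ p.length ≤ L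
        then ⟨h.choose, h.choose_spec.choose⟩ else ⟨⟨0, hn⟩, SimpleGraph.Walk.nil⟩)
    · intro U hU
      rw [Finset.mem_coe, Finset.mem_filter] at hU
      obtain ⟨-, h⟩ := hU
      simp only [dif_pos h]
      rw [Finset.mem_coe, Finset.mem_sigma]
      refine ⟨Finset.mem_univ _, ?_⟩
      rw [SimpleGraph.mem_finsetWalkLengthLT_iff]
      exact Nat.lt_succ_of_le h.choose_spec.choose_spec.2
    · intro U₁ hU₁ U₂ hU₂ heq
      rw [Finset.coe_filter, Set.mem_setOf_eq] at hU₁ hU₂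
      obtain ⟨-, h₁⟩ := hU₁
      obtain ⟨-, h₂⟩ := hU₂
      simp only [dif_pos h₁, dif_pos h₂] at heq
      have e₁ := h₁.choose_spec.choose_spec.1
      have e₂ := h₂.choose_spec.choose_spec.1
      have hg := congrArg (fun s : (Σ u : Fin n, G.Walk u u) => s.2.support.toFinset) heq
      simp only at hg
      rw [e₁, e₂] at hg
      exact hg
  calc _ ≤ _ := this
    _ ≤ n * ((L+1) * Δ ^ L) := count_closed_walks_le G hdeg hΔ L

lemma two_mul_add_one_le_three_pow : ∀ k : ℕ, 2*k+1 ≤ 3^k := by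
  intro k
  induction k with
  | zero => simp
  | succ k ih => calc 2*(k+1)+1 ≤ 3*(2*k+1) := by omega
                  _ ≤ 3*3^k := by omega
                  _ = 3^(k+1) := by ring

lemma real_term_bound (n k Δ : ℕ) (α δ β F : ℝ)
    (hn1 : (1:ℝ) ≤ n)
    (h2 : (3*(Δ:ℝ)^2) * (n:ℝ)^(-β) ≤ 1/2)
    (hek : 1 + δ/2 + β*k ≤ α * k * F)
    (hΔ : 1 ≤ Δ) :
    ((n * ((2*(k-1)+1) * Δ^(2*(k-1))) : ℕ) : ℝ) * (n:ℝ)^(-(α * (F * k)))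
      ≤ (n:ℝ)^(-(δ/2)) * (1/2)^k := by
  have hcast : ((n * ((2*(k-1)+1) * Δ^(2*(k-1))) : ℕ) : ℝ)
      = (n:ℝ) * (((2*(k-1)+1 : ℕ) : ℝ) * ((Δ:ℝ))^(2*(k-1))) := by push_cast; ring
  rw [hcast]
  have hn0 : (0:ℝ) < n := lt_of_lt_of_le zero_lt_one hn1
  have hstep1 : (n:ℝ)^(-(α * (F * k))) ≤ (n:ℝ)^(-(1 + δ/2 + β*k)) := by
    apply Real.rpow_le_rpow_of_exponent_le hn1
    have : α * (F * k) = α * k * F := by ring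
    rw [this]; linarith
  have hsplit : (n:ℝ)^(-(1 + δ/2 + β*(k:ℝ)))
      = (n:ℝ)^(-(1:ℝ)) * (n:ℝ)^(-(δ/2)) * (n:ℝ)^(-(β*k)) := by
    rw [← Real.rpow_add hn0, ← Real.rpow_add hn0]; ring_nf
  have hcomb : ((2*(k-1)+1 : ℕ) : ℝ) * ((Δ:ℝ))^(2*(k-1)) * (n:ℝ)^(-(β*k)) ≤ (1/2)^k := by
    have hpow : (n:ℝ)^(-(β*(k:ℝ))) = ((n:ℝ)^(-β))^k := by
      rw [← Real.rpow_natCast ((n:ℝ)^(-β)) k, ← Real.rpow_mul (le_of_lt hn0)]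
      ring_nf
    rw [hpow]
    have hb1 : ((2*(k-1)+1 : ℕ) : ℝ) ≤ (3:ℝ)^k := by
      have h1 : (2*(k-1)+1 : ℕ) ≤ 3^k := by
        calc (2*(k-1)+1 : ℕ) ≤ 2*k+1 := by omega
          _ ≤ 3^k := two_mul_add_one_le_three_pow k
      exact_mod_cast h1
    have hb2 : ((Δ:ℝ))^(2*(k-1)) ≤ ((Δ:ℝ)^2)^k := by
      rw [← pow_mul]
      apply pow_le_pow_right₀ (by exact_mod_cast hΔ)
      omega
    have hnb0 : (0:ℝ) ≤ (n:ℝ)^(-β) := Real.rpow_nonneg (le_of_lt hn0) _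
    calc ((2*(k-1)+1 : ℕ) : ℝ) * ((Δ:ℝ))^(2*(k-1)) * ((n:ℝ)^(-β))^k
        ≤ (3:ℝ)^k * ((Δ:ℝ)^2)^k * ((n:ℝ)^(-β))^k := by
          apply mul_le_mul_of_nonneg_right _ (pow_nonneg hnb0 k)
          apply mul_le_mul hb1 hb2 (by positivity) (by positivity)
      _ = ((3*(Δ:ℝ)^2) * (n:ℝ)^(-β))^k := by rw [mul_pow, mul_pow]
      _ ≤ (1/2)^k := by
          apply pow_le_pow_left₀ (by positivity) h2
  calc (n:ℝ) * (((2*(k-1)+1 : ℕ) : ℝ) * ((Δ:ℝ))^(2*(k-1))) * (n:ℝ)^(-(α * (F * k)))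
      ≤ (n:ℝ) * (((2*(k-1)+1 : ℕ) : ℝ) * ((Δ:ℝ))^(2*(k-1))) *
          ((n:ℝ)^(-(1:ℝ)) * (n:ℝ)^(-(δ/2)) * (n:ℝ)^(-(β*k))) := by
        apply mul_le_mul_of_nonneg_left _ (by positivity)
        rw [← hsplit]; exact hstep1
    _ = ((n:ℝ) * (n:ℝ)^(-(1:ℝ))) * (n:ℝ)^(-(δ/2)) *
          (((2*(k-1)+1 : ℕ) : ℝ) * ((Δ:ℝ))^(2*(k-1)) * (n:ℝ)^(-(β*k))) := by ring
    _ = (n:ℝ)^(-(δ/2)) * (((2*(k-1)+1 : ℕ) : ℝ) * ((Δ:ℝ))^(2*(k-1)) * (n:ℝ)^(-(β*k))) := by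
        rw [Real.rpow_neg_one]
        field_simp
    _ ≤ (n:ℝ)^(-(δ/2)) * (1/2)^k := by
        apply mul_le_mul_of_nonneg_left hcomb (Real.rpow_nonneg (le_of_lt hn0) _)

lemma Kconst_facts (α c : ℝ) (hα : 0 < α) (hc : 0 < c) (f : ℕ → ℝ)
    (hf : ∀ k : ℕ, 0 < k → c ≤ f k) :
    1 ≤ Kconst α f ∧ ∀ k : ℕ, Kconst α f ≤ k → 1/α < (k:ℝ) * f k := by
  have hmem : ∃ u, u ∈ {u : ℕ | 1 ≤ u ∧ ∀ k : ℕ, u ≤ k → 1 / α < (k : ℝ) * f k} := by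
    obtain ⟨u, hu⟩ := exists_nat_gt (max 1 (1/(α*c)))
    refine ⟨u, ?_, fun k hk => ?_⟩
    · have := (le_max_left 1 (1/(α*c))).trans_lt hu
      exact_mod_cast Nat.one_le_iff_ne_zero.mpr (by rintro rfl; simp at this; linarith)
    · have hk1 : (1:ℝ) ≤ k := by
        have h1 : (1:ℝ) < u := (le_max_left _ _).trans_lt hu
        have : (u:ℝ) ≤ k := Nat.cast_le.mpr hk
        linarith
      have hkpos : 0 < k := by exact_mod_cast lt_of_lt_of_le zero_lt_one hk1
      have hck : c ≤ f k := hf k hkpos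
      have hac : 0 < α * c := mul_pos hα hc
      have huk : 1/(α*c) < (k:ℝ) := by
        have h2 : (u:ℝ) ≤ k := Nat.cast_le.mpr hk
        linarith [(le_max_right 1 (1/(α*c))).trans_lt hu]
      calc 1/α = (1/(α*c)) * c := by field_simp
        _ < (k:ℝ) * c := by
            apply mul_lt_mul_of_pos_right _ hc
            exact huk
        _ ≤ (k:ℝ) * f k := by
            apply mul_le_mul_of_nonneg_left hck (by positivity)
  obtain ⟨u, hu⟩ := hmem
  exact Nat.sInf_mem ⟨u, hu⟩

lemma exists_delta_beta (α c : ℝ) (hα : 0 < α) (hc : 0 < c) (f : ℕ → ℝ)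
    (hf : ∀ k : ℕ, 0 < k → c ≤ f k)
    (K : ℕ) (hK1 : 1 ≤ K) (hKprop : ∀ k : ℕ, K ≤ k → 1/α < (k:ℝ) * f k) :
    ∃ δ β : ℝ, 0 < δ ∧ δ ≤ 1 ∧ 0 < β ∧
      ∀ k : ℕ, K ≤ k → 1 + δ/2 + β*k ≤ α * k * f k := by
  classical
  set K₂ := K + Nat.ceil (3/(α*c)) with hK₂
  have hKK₂ : K ≤ K₂ := Nat.le_add_right _ _
  have hne : (Finset.Icc K K₂).Nonempty := ⟨K, by simp [hKK₂]⟩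
  set δ : ℝ := min 1 ((Finset.Icc K K₂).inf' hne (fun k => α * k * f k - 1)) with hδ
  have hgt : ∀ k : ℕ, K ≤ k → 1 < α * k * f k := by
    intro k hk
    have h := hKprop k hk
    have hkpos : (0:ℝ) < k := by
      have : 1 ≤ k := le_trans hK1 hk
      exact_mod_cast this
    rw [div_lt_iff₀ hα] at h
    calc (1:ℝ) < (k:ℝ) * f k * α := h
      _ = α * k * f k := by ring
  have hδpos : 0 < δ := by
    apply lt_min zero_lt_one
    rw [Finset.lt_inf'_iff]
    intro k hk
    have := hgt k (Finset.mem_Icc.mp hk).1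
    linarith
  have hδ1 : δ ≤ 1 := min_le_left _ _
  have hK₂pos : (0:ℝ) < K₂ := by
    have : 1 ≤ K₂ := le_trans hK1 hKK₂
    exact_mod_cast this
  set β : ℝ := min (δ/(2*K₂)) (α*c/3) with hβ
  have hβpos : 0 < β := lt_min (by positivity) (by positivity)
  refine ⟨δ, β, hδpos, hδ1, hβpos, ?_⟩
  intro k hk
  by_cases hkK₂ : k ≤ K₂
  · have hδle : δ ≤ α * k * f k - 1 := by
      refine le_trans (min_le_right _ _) (Finset.inf'_le _ ?_)
      exact Finset.mem_Icc.mpr ⟨hk, hkK₂⟩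
    have hβk : β * k ≤ δ/2 := by
      have h1 : β ≤ δ/(2*K₂) := min_le_left _ _
      have h2 : (k:ℝ) ≤ K₂ := by exact_mod_cast hkK₂
      have hk0 : (0:ℝ) ≤ k := Nat.cast_nonneg k
      calc β * k ≤ (δ/(2*K₂)) * K₂ := by
            apply mul_le_mul h1 h2 hk0 (by positivity)
        _ = δ/2 := by field_simp
    linarith
  · push_neg at hkK₂
    have hk3 : 3/(α*c) ≤ (k:ℝ) := by
      have h1 : (Nat.ceil (3/(α*c)) : ℝ) ≤ K₂ := by
        rw [hK₂]; push_cast; linarith [Nat.cast_nonneg (α := ℝ) K]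
      calc 3/(α*c) ≤ (Nat.ceil (3/(α*c)) : ℝ) := Nat.le_ceil _
        _ ≤ K₂ := h1
        _ ≤ k := by exact_mod_cast le_of_lt hkK₂
    have hac : (0:ℝ) < α*c := by positivity
    have h3le : 3 ≤ α*c*k := by
      rw [div_le_iff₀ hac] at hk3; linarith
    have hkpos : (0:ℝ) < k := by
      have h4 : K < k := lt_of_le_of_lt hKK₂ hkK₂
      have : 1 ≤ k := le_trans hK1 (le_of_lt h4)
      exact_mod_cast this
    have hcf : α * c * k ≤ α * k * f k := by
      have := hf k (by exact_mod_cast hkpos)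
      have h := mul_le_mul_of_nonneg_left this (le_of_lt (mul_pos hα hkpos))
      calc α * c * k = α * k * c := by ring
        _ ≤ α * k * f k := by nlinarith
    have hβ3 : β ≤ α*c/3 := min_le_right _ _
    have hβk : β * k ≤ (α*c/3) * k := mul_le_mul_of_nonneg_right hβ3 (le_of_lt hkpos)
    nlinarith

end Aux

theorem small_components_bounded
    (α c : ℝ) (hα : 0 < α) (hc : 0 < c) (Δ : ℕ) (hΔ : 1 ≤ Δ)
    (f : ℕ → ℝ) (hf : ∀ k : ℕ, 0 < k → c ≤ f k) :
    ∀ ε : ℝ, 0 < ε → ∃ n₀ : ℕ, ∀ n : ℕ, n₀ ≤ n →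
      ∀ G : SimpleGraph (Fin n),
        (∀ v : Fin n, (G.neighborSet v).ncard ≤ Δ) →
        IsFExpander G f →
        1 - ENNReal.ofReal ε ≤ delMeasure n α
          {ω : Fin n → Bool |
            ∃ C₁ : (G.induce (survivors ω)).ConnectedComponent,
              (∀ C' : (G.induce (survivors ω)).ConnectedComponent,
                C'.supp.ncard ≤ C₁.supp.ncard) ∧
              ∀ C' : (G.induce (survivors ω)).ConnectedComponent,
                C' ≠ C₁ → C'.supp.ncard ≤ Kconst α f - 1} := by
  classical
  intro ε hε
  obtain ⟨hK1, hKprop⟩ := Kconst_facts α c hα hc f hf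
  set K := Kconst α f with hKdef
  obtain ⟨δ, β, hδpos, hδ1, hβpos, hek⟩ := exists_delta_beta α c hα hc f hf K hK1 hKprop
  -- choose n₀
  have hev1 : ∀ᶠ m : ℕ in Filter.atTop, (3*(Δ:ℝ)^2) * (m:ℝ)^(-β) ≤ 1/2 := by
    have h0 : Filter.Tendsto (fun m : ℕ => (3*(Δ:ℝ)^2) * (m:ℝ)^(-β)) Filter.atTop (nhds 0) := by
      have := (tendsto_rpow_neg_atTop hβpos).comp (tendsto_natCast_atTop_atTop (R := ℝ))
      simpa using this.const_mul (3*(Δ:ℝ)^2)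
    exact h0.eventually (eventually_le_nhds (by norm_num))
  have hev2 : ∀ᶠ m : ℕ in Filter.atTop, (m:ℝ)^(-α) ≤ ε/2 := by
    have h0 : Filter.Tendsto (fun m : ℕ => (m:ℝ)^(-α)) Filter.atTop (nhds 0) :=
      (tendsto_rpow_neg_atTop hα).comp (tendsto_natCast_atTop_atTop (R := ℝ))
    exact h0.eventually (eventually_le_nhds (by positivity))
  have hev3 : ∀ᶠ m : ℕ in Filter.atTop, (m:ℝ)^(-(δ/2)) ≤ ε/4 := by
    have h0 : Filter.Tendsto (fun m : ℕ => (m:ℝ)^(-(δ/2))) Filter.atTop (nhds 0) :=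
      (tendsto_rpow_neg_atTop (by positivity)).comp (tendsto_natCast_atTop_atTop (R := ℝ))
    exact h0.eventually (eventually_le_nhds (by positivity))
  obtain ⟨n₁, hn₁⟩ := Filter.eventually_atTop.mp ((hev1.and hev2).and hev3)
  refine ⟨max 2 n₁, fun n hn G hdeg hexpander => ?_⟩
  have hn2 : 2 ≤ n := le_trans (le_max_left _ _) hn
  obtain ⟨⟨hc1, hc2⟩, hc3⟩ := hn₁ n (le_trans (le_max_right _ _) hn)
  have hn0 : 0 < n := by omega
  have hn1R : (1:ℝ) ≤ n := by exact_mod_cast (by omega : 1 ≤ n)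
  have hn0R : (0:ℝ) < n := by linarith
  letI : DecidableRel G.Adj := Classical.decRel _
  have hdeg' : ∀ v : Fin n, G.degree v ≤ Δ := by
    intro v
    have h1 : (G.neighborSet v).ncard = G.degree v := by
      rw [Set.ncard_eq_toFinset_card', ← SimpleGraph.neighborFinset_def]
      rfl
    rw [← h1]; exact hdeg v
  set q : ℝ := (n:ℝ)^(-α) with hqdef
  have hq0 : 0 ≤ q := Real.rpow_nonneg (le_of_lt hn0R) _
  have hq1 : q ≤ 1 := Real.rpow_le_one_of_one_le_of_nonpos hn1R (by linarith)
  have hmin : min (ENNReal.ofReal q) 1 = ENNReal.ofReal q :=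
    min_eq_left (ENNReal.ofReal_le_one.mpr hq1)
  -- bad events
  set famA : ℕ → Finset (Finset (Fin n)) := fun k =>
    Finset.univ.filter (fun U : Finset (Fin n) => U.card = k ∧ K ≤ k ∧ 2*k ≤ n ∧
      ∃ u, ∃ p : G.Walk u u, p.support.toFinset = U ∧ p.length ≤ 2*(k-1)) with hfamA
  set badSet : Finset (Fin n) → Set (Fin n → Bool) := fun U =>
    {ω | ∀ v ∈ Finset.univ.filter (fun v => v ∈ nbhd G (↑U : Set (Fin n))), ω v = true}
    with hbadSet
  set Gset : Set (Fin n → Bool) :=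
    {ω : Fin n → Bool |
      ∃ C₁ : (G.induce (survivors ω)).ConnectedComponent,
        (∀ C' : (G.induce (survivors ω)).ConnectedComponent,
          C'.supp.ncard ≤ C₁.supp.ncard) ∧
        ∀ C' : (G.induce (survivors ω)).ConnectedComponent,
          C' ≠ C₁ → C'.supp.ncard ≤ K - 1} with hGset
  -- deterministic inclusion
  have hincl : Gsetᶜ ⊆
      ({ω : Fin n → Bool | ∀ v ∈ (Finset.univ : Finset (Fin n)), ω v = true} ∪
        ⋃ k ∈ Finset.range (n+1), ⋃ U ∈ famA k, badSet U) := by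
    intro ω hω
    by_cases hdead : ∀ v : Fin n, ω v = true
    · exact Set.mem_union_left _ (fun v _ => hdead v)
    push_neg at hdead
    obtain ⟨v₀, hv₀⟩ := hdead
    have hv₀f : ω v₀ = false := by
      cases h : ω v₀
      · rfl
      · exact absurd h hv₀
    by_contra hnot
    apply hω
    have hnotbad : ∀ k, k ∈ Finset.range (n+1) → ∀ U ∈ famA k, ω ∉ badSet U := by
      intro k hk U hU hbad
      exact hnot (Set.mem_union_right _
        (Set.mem_biUnion hk (Set.mem_biUnion hU hbad)))
    haveI hsne : Nonempty ↥(survivors ω) := ⟨⟨v₀, hv₀f⟩⟩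
    haveI : Nonempty ((G.induce (survivors ω)).ConnectedComponent) :=
      ⟨(G.induce (survivors ω)).connectedComponentMk ⟨v₀, hv₀f⟩⟩
    obtain ⟨C₁, hC₁⟩ := Finite.exists_max
      (fun C : (G.induce (survivors ω)).ConnectedComponent => C.supp.ncard)
    refine ⟨C₁, hC₁, ?_⟩
    intro C' hC'
    by_contra hbig
    push_neg at hbig
    -- the support of C' as a subset of Fin n
    set S : Set (Fin n) := Subtype.val '' C'.supp with hS
    have hSfin : S.Finite := Set.toFinite S
    set SF : Finset (Fin n) := hSfin.toFinset with hSF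
    have hSFcoe : (↑SF : Set (Fin n)) = S := Set.Finite.coe_toFinset hSfin
    have hkcard : SF.card = C'.supp.ncard := by
      rw [← Set.ncard_eq_toFinset_card S hSfin, hS,
        Set.ncard_image_of_injective _ Subtype.val_injective]
    -- nonempty
    obtain ⟨w₀, hw₀⟩ := C'.exists_rep
    have hw₀supp : w₀ ∈ C'.supp := by
      rw [SimpleGraph.ConnectedComponent.mem_supp_iff]; exact hw₀
    have hSFne : SF.Nonempty := by
      refine ⟨↑w₀, ?_⟩
      rw [hSF, Set.Finite.mem_toFinset]
      exact ⟨w₀, hw₀supp, rfl⟩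
    -- walk connectivity inside S
    have hconnS : ∀ x ∈ SF, ∀ y ∈ SF, ∃ p : G.Walk x y,
        ∀ z ∈ p.support, z ∈ (↑SF : Set (Fin n)) := by
      intro x hx y hy
      rw [hSF, Set.Finite.mem_toFinset] at hx hy
      obtain ⟨x', hx'supp, rfl⟩ := hx
      obtain ⟨y', hy'supp, rfl⟩ := hy
      rw [SimpleGraph.ConnectedComponent.mem_supp_iff] at hx'supp hy'supp
      have hreach : (G.induce (survivors ω)).Reachable x' y' :=
        (SimpleGraph.ConnectedComponent.eq).mp (hx'supp.trans hy'supp.symm)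
      obtain ⟨p'⟩ := hreach
      refine ⟨p'.map (SimpleGraph.Embedding.induce (survivors ω)).toHom, ?_⟩
      intro z hz
      have hz2 : z ∈ (p'.map (SimpleGraph.Embedding.induce (survivors ω)).toHom).support := hz
      rw [SimpleGraph.Walk.support_map, List.mem_map] at hz2
      obtain ⟨z', hz', rfl⟩ := hz2
      rw [hSFcoe]
      refine ⟨z', ?_, rfl⟩
      rw [SimpleGraph.ConnectedComponent.mem_supp_iff]
      have : (G.induce (survivors ω)).Reachable x' z' := ⟨p'.takeUntil z' hz'⟩
      rw [← SimpleGraph.ConnectedComponent.sound this]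
      exact hx'supp
    obtain ⟨u, hu, p, hpsupp, hplen⟩ := exists_spanning_closed_walk SF hSFne hconnS
    -- size bounds
    have hKk : K ≤ SF.card := by omega
    have hdisj : Disjoint C'.supp C₁.supp := by
      rw [Set.disjoint_left]
      intro a ha ha1
      rw [SimpleGraph.ConnectedComponent.mem_supp_iff] at ha ha1
      exact hC' (ha.symm.trans ha1)
    have hdisjS : Disjoint S (Subtype.val '' C₁.supp) := by
      rw [Set.disjoint_left]
      rintro a ⟨a', ha', rfl⟩ ⟨a₁, ha₁, heq⟩
      have : a₁ = a' := Subtype.val_injective heq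
      subst this
      exact (Set.disjoint_left.mp hdisj ha') ha₁
    have hcard1 : (Subtype.val '' C₁.supp).ncard = C₁.supp.ncard :=
      Set.ncard_image_of_injective _ Subtype.val_injective
    have hSn : S.ncard + (Subtype.val '' C₁.supp).ncard ≤ n := by
      rw [← Set.ncard_union_eq hdisjS hSfin (Set.toFinite _)]
      calc (S ∪ Subtype.val '' C₁.supp).ncard
          ≤ (Set.univ : Set (Fin n)).ncard :=
            Set.ncard_le_ncard (Set.subset_univ _) Set.finite_univ
        _ = n := by rw [Set.ncard_univ]; simp
    have hSle : S.ncard ≤ (Subtype.val '' C₁.supp).ncard := by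
      rw [hcard1, hS, Set.ncard_image_of_injective _ Subtype.val_injective]
      exact hC₁ C'
    have h2k : 2 * SF.card ≤ n := by
      have : SF.card = S.ncard := by
        rw [hkcard, hS, Set.ncard_image_of_injective _ Subtype.val_injective]
      omega
    -- SF is in the family
    have hSFmem : SF ∈ famA SF.card := by
      rw [hfamA, Finset.mem_filter]
      refine ⟨Finset.mem_univ _, rfl, hKk, h2k, u, p, ?_, hplen⟩
      ext z
      rw [List.mem_toFinset]
      exact hpsupp z
    have hkrange : SF.card ∈ Finset.range (n+1) := by
      rw [Finset.mem_range]
      have := Finset.card_le_univ SF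
      simp only [Finset.card_univ, Fintype.card_fin] at this
      omega
    have hωbad := hnotbad SF.card hkrange SF hSFmem
    rw [hbadSet] at hωbad
    simp only [Set.mem_setOf_eq, not_forall] at hωbad
    obtain ⟨v, hvmem, hvneq⟩ := hωbad
    rw [Finset.mem_filter] at hvmem
    obtain ⟨-, hvnbhd⟩ := hvmem
    rw [hSFcoe] at hvnbhd
    obtain ⟨hvS, u₀, hu₀S, hadj⟩ := hvnbhd
    have hvfalse : ω v = false := by
      cases h : ω v
      · rfl
      · exact absurd h hvneq
    obtain ⟨u₀', hu₀supp, rfl⟩ := hu₀S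
    have hv' : v ∈ survivors ω := hvfalse
    have hadj' : (G.induce (survivors ω)).Adj u₀' ⟨v, hv'⟩ := hadj
    apply hvS
    refine ⟨⟨v, hv'⟩, ?_, rfl⟩
    rw [SimpleGraph.ConnectedComponent.mem_supp_iff] at hu₀supp ⊢
    rw [← SimpleGraph.ConnectedComponent.sound hadj'.reachable]
    exact hu₀supp
  -- measure bounds
  have hbadmeas : ∀ U : Finset (Fin n), delMeasure n α (badSet U)
      = ENNReal.ofReal (q ^ (Finset.univ.filter
          (fun v => v ∈ nbhd G (↑U : Set (Fin n)))).card) := by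
    intro U
    rw [hbadSet]
    rw [delMeasure_allTrue n α]
    rw [← hqdef, hmin, ← ENNReal.ofReal_pow hq0]
  -- per-k bound
  have hperk : ∀ k ∈ Finset.range (n+1),
      (∑ U ∈ famA k, delMeasure n α (badSet U))
        ≤ ENNReal.ofReal ((n:ℝ)^(-(δ/2)) * (1/2)^k) := by
    intro k _
    rcases Finset.eq_empty_or_nonempty (famA k) with hempty | hfne
    · rw [hempty]
      simp only [Finset.sum_empty]
      exact zero_le
    obtain ⟨U₀, hU₀⟩ := hfne
    have hU₀' := Finset.mem_filter.mp hU₀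
    have hKk : K ≤ k := hU₀'.2.2.1
    have hterm : ∀ U ∈ famA k, delMeasure n α (badSet U)
        ≤ ENNReal.ofReal ((n:ℝ)^(-(α * (f k * k)))) := by
      intro U hU
      have hU' := Finset.mem_filter.mp hU
      obtain ⟨-, hUcard, -, h2k, -⟩ := hU'
      set m : ℕ := (Finset.univ.filter
        (fun v => v ∈ nbhd G (↑U : Set (Fin n)))).card with hm
      have hnbhdcard : (nbhd G (↑U : Set (Fin n))).ncard = m := by
        have : nbhd G (↑U : Set (Fin n)) =
            ↑(Finset.univ.filter (fun v => v ∈ nbhd G (↑U : Set (Fin n)))) := by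
          ext v; simp
        rw [this, Set.ncard_coe_finset]
      have hUne : (↑U : Set (Fin n)).Nonempty := by
        rw [Finset.coe_nonempty, ← Finset.card_pos]
        omega
      have hUncard : (↑U : Set (Fin n)).ncard = k := by
        rw [Set.ncard_coe_finset]; exact hUcard
      have hhalf : (((↑U : Set (Fin n)).ncard : ℝ)) ≤ ((Nat.card (Fin n)) : ℝ) / 2 := by
        rw [hUncard]
        have hnn : (Nat.card (Fin n)) = n := by simp
        rw [hnn]
        have : (2*k : ℕ) ≤ n := h2k
        have h2 : ((2*k : ℕ) : ℝ) ≤ n := by exact_mod_cast this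
        push_cast at h2
        linarith
      have hexp := hexpander (↑U : Set (Fin n)) hUne hhalf
      rw [hUncard, hnbhdcard] at hexp
      -- now : f k * k ≤ m
      rw [hbadmeas U, ← hm]
      apply ENNReal.ofReal_le_ofReal
      have hqm : q ^ m = (n:ℝ)^((-α) * (m:ℝ)) := by
        rw [hqdef, ← Real.rpow_natCast ((n:ℝ)^(-α)) m, ← Real.rpow_mul (le_of_lt hn0R)]
      rw [hqm]
      apply Real.rpow_le_rpow_of_exponent_le hn1R
      have hfk : f k * k ≤ (m:ℝ) := hexp
      nlinarith
    have hcount : (famA k).card ≤ n * ((2*(k-1)+1) * Δ^(2*(k-1))) := by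
      refine le_trans (Finset.card_le_card ?_) (connFamily_card_le G hdeg' hΔ hn0 k)
      intro U hU
      rw [hfamA, Finset.mem_filter] at hU
      rw [Finset.mem_filter]
      exact ⟨hU.1, hU.2.2.2.2⟩
    calc (∑ U ∈ famA k, delMeasure n α (badSet U))
        ≤ ∑ _U ∈ famA k, ENNReal.ofReal ((n:ℝ)^(-(α * (f k * k)))) :=
          Finset.sum_le_sum hterm
      _ = ((famA k).card : ENNReal) * ENNReal.ofReal ((n:ℝ)^(-(α * (f k * k)))) := by
          rw [Finset.sum_const, nsmul_eq_mul]
      _ ≤ ((n * ((2*(k-1)+1) * Δ^(2*(k-1))) : ℕ) : ENNReal) *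
            ENNReal.ofReal ((n:ℝ)^(-(α * (f k * k)))) := by
          exact mul_le_mul_left (Nat.cast_le.mpr hcount) _
      _ = ENNReal.ofReal (((n * ((2*(k-1)+1) * Δ^(2*(k-1))) : ℕ) : ℝ) *
            (n:ℝ)^(-(α * (f k * k)))) := by
          rw [← ENNReal.ofReal_natCast (n * ((2*(k-1)+1) * Δ^(2*(k-1))))]
          rw [← ENNReal.ofReal_mul (Nat.cast_nonneg _)]
      _ ≤ ENNReal.ofReal ((n:ℝ)^(-(δ/2)) * (1/2)^k) := by
          apply ENNReal.ofReal_le_ofReal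
          exact real_term_bound n k Δ α δ β (f k) hn1R hc1 (hek k hKk) hΔ
  -- assembling
  have hGmeas : MeasurableSet Gset := (Set.to_countable _).measurableSet
  have hmain : delMeasure n α Gsetᶜ ≤ ENNReal.ofReal ε := by
    refine le_trans (measure_mono hincl) ?_
    refine le_trans (measure_union_le _ _) ?_
    have h1 : delMeasure n α {ω : Fin n → Bool | ∀ v ∈ (Finset.univ : Finset (Fin n)), ω v = true}
        = ENNReal.ofReal (q ^ n) := by
      rw [delMeasure_allTrue n α Finset.univ, ← hqdef, hmin, ← ENNReal.ofReal_pow hq0]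
      simp
    have h2 : delMeasure n α (⋃ k ∈ Finset.range (n+1), ⋃ U ∈ famA k, badSet U)
        ≤ ∑ k ∈ Finset.range (n+1), ENNReal.ofReal ((n:ℝ)^(-(δ/2)) * (1/2)^k) := by
      refine le_trans (measure_biUnion_finset_le _ _) (Finset.sum_le_sum (fun k hk => ?_))
      exact le_trans (measure_biUnion_finset_le _ _) (hperk k hk)
    calc delMeasure n α {ω : Fin n → Bool | ∀ v ∈ (Finset.univ : Finset (Fin n)), ω v = true}
          + delMeasure n α (⋃ k ∈ Finset.range (n+1), ⋃ U ∈ famA k, badSet U)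
        ≤ ENNReal.ofReal (q ^ n)
          + ∑ k ∈ Finset.range (n+1), ENNReal.ofReal ((n:ℝ)^(-(δ/2)) * (1/2)^k) :=
          add_le_add (le_of_eq h1) h2
      _ = ENNReal.ofReal (q ^ n)
          + ENNReal.ofReal (∑ k ∈ Finset.range (n+1), (n:ℝ)^(-(δ/2)) * (1/2)^k) := by
          rw [ENNReal.ofReal_sum_of_nonneg (fun k _ =>
            mul_nonneg (Real.rpow_nonneg (le_of_lt hn0R) _) (pow_nonneg (by norm_num) k))]
      _ = ENNReal.ofReal (q ^ n + ∑ k ∈ Finset.range (n+1), (n:ℝ)^(-(δ/2)) * (1/2)^k) := by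
          rw [ENNReal.ofReal_add (pow_nonneg hq0 n) (Finset.sum_nonneg (fun k _ =>
            mul_nonneg (Real.rpow_nonneg (le_of_lt hn0R) _) (pow_nonneg (by norm_num) k)))]
      _ ≤ ENNReal.ofReal ε := by
          apply ENNReal.ofReal_le_ofReal
          have hq_small : q ^ n ≤ ε/2 := by
            calc q ^ n ≤ q := pow_le_of_le_one hq0 hq1 (by omega)
              _ ≤ ε/2 := hc2
          have hsum_small : (∑ k ∈ Finset.range (n+1), (n:ℝ)^(-(δ/2)) * (1/2)^k) ≤ ε/2 := by
            rw [← Finset.mul_sum]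
            have hgeo : (∑ k ∈ Finset.range (n+1), ((1:ℝ)/2)^k) ≤ 2 := sum_geometric_two_le _
            have hnd : (0:ℝ) ≤ (n:ℝ)^(-(δ/2)) := Real.rpow_nonneg (le_of_lt hn0R) _
            calc (n:ℝ)^(-(δ/2)) * (∑ k ∈ Finset.range (n+1), ((1:ℝ)/2)^k)
                ≤ (n:ℝ)^(-(δ/2)) * 2 := by
                  apply mul_le_mul_of_nonneg_left hgeo hnd
              _ ≤ (ε/4) * 2 := by apply mul_le_mul_of_nonneg_right hc3 (by norm_num)
              _ = ε/2 := by ring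
          linarith
  have hcompl : delMeasure n α Gsetᶜ = 1 - delMeasure n α Gset := by
    rw [measure_compl hGmeas (measure_ne_top _ _), measure_univ]
  rw [hcompl] at hmain
  have hle1 : delMeasure n α Gset ≤ 1 := prob_le_one
  calc (1 : ENNReal) - ENNReal.ofReal ε
      ≤ 1 - (1 - delMeasure n α Gset) := tsub_le_tsub_left hmain 1
    _ = delMeasure n α Gset := ENNReal.sub_sub_cancel ENNReal.one_ne_top hle1
end

section
/- Let G be a graph on n vertices with average degree d̃ and Laplacian deviation θ = max{|d̃ − σ_i| : i ≥ 1}, and assume θ < d̃. Then G is an h-expander, where h(i) = (d̃² − θ²)/(θ² + d̃²·i/(n−i)) for 1 ≤ i ≤ ⌊n/2⌋; that is, every subset U of vertices with 1 ≤ |U| ≤ n/2 satisfies |N_G(U)| ≥ h(|U|)·|U|. -/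
open Matrix

-- The combinatorial Laplacian `D - A` of a graph, with real entries.
open Classical in
noncomputable def lapM {n : ℕ} (G : SimpleGraph (Fin n)) : Matrix (Fin n) (Fin n) ℝ :=
  G.lapMatrix ℝ

/-- The average degree of a graph. -/
noncomputable def avgDeg {n : ℕ} (G : SimpleGraph (Fin n)) : ℝ :=
  (∑ v : Fin n, ((G.neighborSet v).ncard : ℝ)) / n

/-- `θ(G) = max {|d̃ - σᵢ| : i ≥ 1}`: the eigenvalues `σᵢ`, `i ≥ 1`, of the Laplacian
(in ascending order, `σ₀ = 0` corresponding to the all-ones eigenvector) are exactly the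
eigenvalues admitting an eigenvector orthogonal to the all-ones vector. -/
noncomputable def lapDeviation {n : ℕ} (G : SimpleGraph (Fin n)) : ℝ :=
  sSup {r : ℝ | ∃ (σ : ℝ) (x : Fin n → ℝ), x ≠ 0 ∧ (∑ v : Fin n, x v) = 0 ∧
    lapM G *ᵥ x = σ • x ∧ r = |avgDeg G - σ|}

/-- The set whose supremum defines `lapDeviation`. -/
def devSet {n : ℕ} (G : SimpleGraph (Fin n)) : Set ℝ :=
  {r : ℝ | ∃ (σ : ℝ) (x : Fin n → ℝ), x ≠ 0 ∧ (∑ v : Fin n, x v) = 0 ∧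
    lapM G *ᵥ x = σ • x ∧ r = |avgDeg G - σ|}

lemma lapDeviation_eq_sSup {n : ℕ} (G : SimpleGraph (Fin n)) :
    lapDeviation G = sSup (devSet G) := rfl

lemma lapM_isHermitian {n : ℕ} (G : SimpleGraph (Fin n)) : (lapM G).IsHermitian := by
  classical
  unfold lapM
  convert (SimpleGraph.posSemidef_lapMatrix ℝ G).1 using 2

lemma lapM_symm {n : ℕ} (G : SimpleGraph (Fin n)) (v w : Fin n) :
    lapM G v w = lapM G w v := by
  have := lapM_isHermitian G
  rw [Matrix.IsHermitian] at this
  conv_rhs => rw [← this]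
  simp [Matrix.conjTranspose_apply]

lemma lapM_row_sum {n : ℕ} (G : SimpleGraph (Fin n)) (v : Fin n) :
    ∑ w, lapM G v w = 0 := by
  classical
  have h : (lapM G *ᵥ (fun _ => (1:ℝ))) v = 0 := by
    unfold lapM
    rw [SimpleGraph.lapMatrix_mulVec_const_eq_zero]
    rfl
  simpa [Matrix.mulVec, dotProduct] using h

lemma lapM_col_sum {n : ℕ} (G : SimpleGraph (Fin n)) (w : Fin n) :
    ∑ v, lapM G v w = 0 := by
  simp_rw [fun v => lapM_symm G v w]
  exact lapM_row_sum G w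

/-- The sum of the entries of `L x` vanishes. -/
lemma sum_lapM_mulVec {n : ℕ} (G : SimpleGraph (Fin n)) (x : Fin n → ℝ) :
    ∑ v, (lapM G *ᵥ x) v = 0 := by
  simp only [Matrix.mulVec, dotProduct]
  rw [Finset.sum_comm]
  simp only [← Finset.sum_mul, lapM_col_sum, zero_mul, Finset.sum_const_zero]

/-- Symmetry of the Laplacian bilinear form. -/
lemma lapM_bilin_symm {n : ℕ} (G : SimpleGraph (Fin n)) (x y : Fin n → ℝ) :
    ∑ v, (lapM G *ᵥ x) v * y v = ∑ v, x v * (lapM G *ᵥ y) v := by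
  simp only [Matrix.mulVec, dotProduct, Finset.sum_mul, Finset.mul_sum]
  rw [Finset.sum_comm]
  refine Finset.sum_congr rfl fun v _ => Finset.sum_congr rfl fun w _ => ?_
  rw [lapM_symm G w v]
  ring


lemma lapM_mulVec_one {n : ℕ} (G : SimpleGraph (Fin n)) :
    lapM G *ᵥ (fun _ => (1:ℝ)) = 0 := by
  classical
  unfold lapM
  rw [SimpleGraph.lapMatrix_mulVec_const_eq_zero]

lemma devSet_bddAbove {n : ℕ} (G : SimpleGraph (Fin n)) : BddAbove (devSet G) := by
  classical
  refine ⟨|avgDeg G| + ∑ v, ∑ w, |lapM G v w|, ?_⟩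
  rintro r ⟨σ, x, hx, -, heig, rfl⟩
  have hex : ∃ v, x v ≠ 0 := by
    by_contra hh
    push_neg at hh
    exact hx (funext fun v => hh v)
  obtain ⟨v₀, hv₀⟩ := hex
  obtain ⟨i, -, hmax⟩ := Finset.exists_max_image Finset.univ (fun v => |x v|)
    ⟨v₀, Finset.mem_univ v₀⟩
  have hxi : 0 < |x i| := lt_of_lt_of_le (abs_pos.2 hv₀) (hmax v₀ (Finset.mem_univ v₀))
  have hσ : |σ| ≤ ∑ v, ∑ w, |lapM G v w| := by
    have h1 : σ * x i = ∑ w, lapM G i w * x w := by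
      have := congrFun heig i
      simp only [Pi.smul_apply, smul_eq_mul] at this
      rw [← this]
      simp [Matrix.mulVec, dotProduct]
    have h2 : |σ| * |x i| ≤ (∑ w, |lapM G i w|) * |x i| := by
      calc |σ| * |x i| = |σ * x i| := (abs_mul _ _).symm
        _ = |∑ w, lapM G i w * x w| := by rw [h1]
        _ ≤ ∑ w, |lapM G i w * x w| := Finset.abs_sum_le_sum_abs _ _
        _ ≤ ∑ w, |lapM G i w| * |x i| := by
            refine Finset.sum_le_sum fun w _ => ?_
            rw [abs_mul]
            exact mul_le_mul_of_nonneg_left (hmax w (Finset.mem_univ w)) (abs_nonneg _)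
        _ = (∑ w, |lapM G i w|) * |x i| := (Finset.sum_mul _ _ _).symm
    have h3 : |σ| ≤ ∑ w, |lapM G i w| := le_of_mul_le_mul_right h2 hxi
    refine h3.trans ?_
    exact Finset.single_le_sum (f := fun v => ∑ w, |lapM G v w|)
      (fun v _ => Finset.sum_nonneg fun w _ => abs_nonneg _) (Finset.mem_univ i)
  calc |avgDeg G - σ| ≤ |avgDeg G| + |σ| := abs_sub _ _
    _ ≤ |avgDeg G| + ∑ v, ∑ w, |lapM G v w| := by linarith

lemma le_lapDeviation {n : ℕ} (G : SimpleGraph (Fin n)) {σ : ℝ} {x : Fin n → ℝ}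
    (hx : x ≠ 0) (hsum : ∑ v, x v = 0) (heig : lapM G *ᵥ x = σ • x) :
    |avgDeg G - σ| ≤ lapDeviation G :=
  le_csSup (devSet_bddAbove G) ⟨σ, x, hx, hsum, heig, rfl⟩

lemma lapDeviation_nonneg {n : ℕ} (G : SimpleGraph (Fin n)) : 0 ≤ lapDeviation G := by
  rcases Set.eq_empty_or_nonempty (devSet G) with h | ⟨r, hr⟩
  · rw [lapDeviation_eq_sSup, h, Real.sSup_empty]
  · obtain ⟨σ, x, hx, hsum, heig, rfl⟩ := hr
    exact (abs_nonneg _).trans (le_lapDeviation G hx hsum heig)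


lemma parseval_aux {n : ℕ} (b : OrthonormalBasis (Fin n) ℝ (EuclideanSpace ℝ (Fin n)))
    (w : EuclideanSpace ℝ (Fin n)) :
    ∑ v, (w v)^2 = ∑ j, (b.repr w j)^2 := by
  have h1 : ‖b.repr w‖ = ‖w‖ := b.repr.norm_map w
  rw [EuclideanSpace.norm_eq, EuclideanSpace.norm_eq] at h1
  have h2 := congrArg (· ^ 2) h1
  simp only [] at h2
  rw [Real.sq_sqrt (by positivity), Real.sq_sqrt (by positivity)] at h2
  simpa [Real.norm_eq_abs, sq_abs] using h2.symm

lemma repr_aux {n : ℕ} (b : OrthonormalBasis (Fin n) ℝ (EuclideanSpace ℝ (Fin n)))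
    (w : EuclideanSpace ℝ (Fin n)) (j : Fin n) :
    b.repr w j = ∑ v, (b j) v * w v := by
  rw [OrthonormalBasis.repr_apply_apply]
  simp [PiLp.inner_apply, RCLike.inner_apply, conj_trivial]
  exact Finset.sum_congr rfl fun v _ => mul_comm _ _


lemma lapM_eq {n : ℕ} (G : SimpleGraph (Fin n)) [inst : DecidableRel G.Adj] :
    lapM G = G.lapMatrix ℝ := by
  unfold lapM
  congr!

/-- Key spectral estimate: for a mean-zero vector `x`,
`‖d̃ x - L x‖² ≤ θ² ‖x‖²`. -/
lemma specA {n : ℕ} (G : SimpleGraph (Fin n)) (hlt : lapDeviation G < avgDeg G)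
    (hn : (n:ℝ) ≠ 0) (x : Fin n → ℝ) (hx : ∑ v, x v = 0) :
    ∑ v, (avgDeg G * x v - (lapM G *ᵥ x) v)^2
      ≤ (lapDeviation G)^2 * ∑ v, (x v)^2 := by
  classical
  have hθ0 : 0 ≤ lapDeviation G := lapDeviation_nonneg G
  have hd : 0 < avgDeg G := lt_of_le_of_lt hθ0 hlt
  set d : ℝ := avgDeg G with hd_def
  set θ : ℝ := lapDeviation G with hθ_def
  have hL : (lapM G).IsHermitian := lapM_isHermitian G
  set b : OrthonormalBasis (Fin n) ℝ (EuclideanSpace ℝ (Fin n)) := hL.eigenvectorBasis with hb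
  set σ : Fin n → ℝ := hL.eigenvalues with hσdef
  let x' : EuclideanSpace ℝ (Fin n) := WithLp.toLp 2 x
  let z' : EuclideanSpace ℝ (Fin n) := WithLp.toLp 2 (fun v => d * x v - (lapM G *ᵥ x) v)
  have heig : ∀ j, lapM G *ᵥ (fun v => b j v) = fun v => σ j * b j v := by
    intro j
    have h := hL.mulVec_eigenvectorBasis j
    funext v
    have h2 := congrFun h v
    simpa using h2
  have coef : ∀ j, b.repr z' j = (d - σ j) * b.repr x' j := by
    intro j
    rw [repr_aux, repr_aux]
    have h1 : ∑ v, (lapM G *ᵥ x) v * (b j) v = σ j * ∑ v, (b j) v * x v := by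
      rw [lapM_bilin_symm G x (fun v => b j v), heig j]
      rw [Finset.mul_sum]
      exact Finset.sum_congr rfl fun v _ => by ring
    have h2 : ∑ v, (b j) v * z' v
        = d * (∑ v, (b j) v * x v) - ∑ v, (lapM G *ᵥ x) v * (b j) v := by
      simp only [z', WithLp.ofLp_toLp, mul_sub]
      rw [Finset.sum_sub_distrib, Finset.mul_sum]
      congr 1
      · exact Finset.sum_congr rfl fun v _ => by ring
      · exact Finset.sum_congr rfl fun v _ => by ring
    rw [h2, h1]
    ring
  have bound : ∀ j, (b.repr z' j)^2 ≤ θ^2 * (b.repr x' j)^2 := by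
    intro j
    rw [coef j]
    by_cases hσ0 : σ j = 0
    · have hker : lapM G *ᵥ (fun v => b j v) = 0 := by
        rw [heig j]
        funext v
        rw [hσ0, zero_mul]
        rfl
      set s : ℝ := ∑ v, (b j) v with hs
      have hconst : ∀ v, (b j) v = s / n := by
        by_contra hh
        push_neg at hh
        obtain ⟨v₀, hv₀⟩ := hh
        set w : Fin n → ℝ := fun v => (b j) v - s / n with hw
        have hwne : w ≠ 0 := by
          intro h
          exact hv₀ (by have := congrFun h v₀; simpa [hw, sub_eq_zero] using this)
        have hwsum : ∑ v, w v = 0 := by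
          simp only [hw, Finset.sum_sub_distrib, ← hs, Finset.sum_const,
            Finset.card_univ, Fintype.card_fin, nsmul_eq_mul]
          field_simp
          ring
        have hweig : lapM G *ᵥ w = (0:ℝ) • w := by
          have hwe : w = (fun v => (b j) v) - (s/n) • (fun _ => (1:ℝ)) := by
            funext v; simp [hw]
          rw [hwe, Matrix.mulVec_sub, Matrix.mulVec_smul, lapM_mulVec_one, hker,
            smul_zero, sub_zero, zero_smul]
        have hle := le_lapDeviation G hwne hwsum hweig
        rw [sub_zero, abs_of_pos hd] at hle
        exact absurd hle (not_le.2 hlt)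
      have hc0 : b.repr x' j = 0 := by
        rw [repr_aux]
        calc ∑ v, (b j) v * x' v = ∑ v, (s/n) * x v := by
              exact Finset.sum_congr rfl fun v _ => by rw [hconst v]
          _ = (s/n) * ∑ v, x v := (Finset.mul_sum _ _ _).symm
          _ = 0 := by rw [hx, mul_zero]
      rw [hc0]
      simp
    · have hbsum : ∑ v, (b j) v = 0 := by
        have h0 := sum_lapM_mulVec G (fun v => b j v)
        rw [heig j] at h0
        simp only [← Finset.mul_sum] at h0
        exact (mul_eq_zero.1 h0).resolve_left hσ0
      have hbne : (fun v => (b j) v) ≠ (0 : Fin n → ℝ) := by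
        intro hfn
        exact b.orthonormal.ne_zero j (by ext v; simpa using congrFun hfn v)
      have hle := le_lapDeviation G (σ := σ j) hbne hbsum (by rw [heig j]; rfl)
      have h2 : (d - σ j)^2 ≤ θ^2 := by
        rw [← sq_abs (d - σ j)]
        exact pow_le_pow_left₀ (abs_nonneg _) hle 2
      calc ((d - σ j) * b.repr x' j)^2 = (d - σ j)^2 * (b.repr x' j)^2 := by ring
        _ ≤ θ^2 * (b.repr x' j)^2 := mul_le_mul_of_nonneg_right h2 (sq_nonneg _)
  calc ∑ v, (avgDeg G * x v - (lapM G *ᵥ x) v)^2 = ∑ j, (b.repr z' j)^2 := parseval_aux b z'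
    _ ≤ ∑ j, θ^2 * (b.repr x' j)^2 := Finset.sum_le_sum fun j _ => bound j
    _ = θ^2 * ∑ j, (b.repr x' j)^2 := (Finset.mul_sum _ _ _).symm
    _ = θ^2 * ∑ v, (x v)^2 := by rw [← parseval_aux b x']

set_option maxHeartbeats 1000000 in
theorem spectral_expansion
    (n : ℕ) (G : SimpleGraph (Fin n))
    (hlt : lapDeviation G < avgDeg G) :
    ∀ U : Set (Fin n), U.Nonempty → (U.ncard : ℝ) ≤ (n : ℝ) / 2 →
      ((avgDeg G) ^ 2 - (lapDeviation G) ^ 2) /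
          ((lapDeviation G) ^ 2 + (avgDeg G) ^ 2 * (U.ncard : ℝ) / ((n : ℝ) - (U.ncard : ℝ)))
        * (U.ncard : ℝ) ≤ ((nbhd G U).ncard : ℝ) := by
  classical
  intro U hUne hUhalf
  have hθ0 : 0 ≤ lapDeviation G := lapDeviation_nonneg G
  have hd : 0 < avgDeg G := lt_of_le_of_lt hθ0 hlt
  set d : ℝ := avgDeg G with hd_def
  set θ : ℝ := lapDeviation G with hθ_def
  have hn : 0 < (n : ℝ) := by
    rcases Nat.eq_zero_or_pos n with h0 | h0
    · exfalso
      have : avgDeg G = 0 := by subst h0; simp [avgDeg]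
      rw [← hd_def] at this
      linarith
    · exact_mod_cast h0
  set i : ℝ := (U.ncard : ℝ) with hi_def
  set m : ℝ := ((nbhd G U).ncard : ℝ) with hm_def
  have hi1 : 1 ≤ i := by
    have h1 : 0 < U.ncard := (Set.ncard_pos (Set.toFinite U)).2 hUne
    rw [hi_def]
    exact_mod_cast h1
  have hm0 : 0 ≤ m := by rw [hm_def]; exact Nat.cast_nonneg _
  set u : Fin n → ℝ := fun v => if v ∈ U then 1 else 0 with hu_def
  have hsum_u : ∑ v, u v = i := by
    rw [hi_def, Set.ncard_eq_toFinset_card' U]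
    simp only [hu_def, Finset.sum_boole]
    congr 1
    rw [Set.filter_mem_univ_eq_toFinset]
  have hsum_u2 : ∑ v, (u v)^2 = i := by
    rw [← hsum_u]
    exact Finset.sum_congr rfl fun v _ => by by_cases h : v ∈ U <;> simp [hu_def, h]
  set Lu : Fin n → ℝ := lapM G *ᵥ u with hLu_def
  set z : Fin n → ℝ := fun v => d * u v - Lu v with hz_def
  have hsum_z : ∑ v, z v = d * i := by
    simp only [hz_def, Finset.sum_sub_distrib, ← Finset.mul_sum, hsum_u, hLu_def,
      sum_lapM_mulVec, sub_zero]
  set S : Finset (Fin n) := U.toFinset ∪ (nbhd G U).toFinset with hS_def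
  have hScard : (S.card : ℝ) = i + m := by
    rw [hS_def, Finset.card_union_of_disjoint, hi_def, hm_def,
      Set.ncard_eq_toFinset_card' U, Set.ncard_eq_toFinset_card' (nbhd G U)]
    · push_cast; ring
    · rw [Finset.disjoint_left]
      intro a ha hb
      rw [Set.mem_toFinset] at ha hb
      exact hb.1 ha
  have hz_zero : ∀ v ∉ S, z v = 0 := by
    intro v hv
    rw [hS_def, Finset.mem_union, not_or, Set.mem_toFinset, Set.mem_toFinset] at hv
    obtain ⟨hvU, hvN⟩ := hv
    have huv : u v = 0 := by simp [hu_def, hvU]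
    have hLuv : Lu v = 0 := by
      rw [hLu_def, lapM_eq, SimpleGraph.lapMatrix_mulVec_apply, huv]
      have : ∀ w ∈ G.neighborFinset v, u w = 0 := by
        intro w hw
        rw [SimpleGraph.mem_neighborFinset] at hw
        have hwU : w ∉ U := fun hmem => hvN ⟨hvU, w, hmem, hw.symm⟩
        simp [hu_def, hwU]
      rw [Finset.sum_eq_zero this]
      ring
    rw [hz_def]
    simp [huv, hLuv]
  have hsum_zS : ∑ v ∈ S, z v = d * i := by
    rw [← hsum_z]
    exact Finset.sum_subset (Finset.subset_univ S) (fun v _ hv => hz_zero v hv)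
  have hCS : (d * i)^2 ≤ (i + m) * ∑ v, (z v)^2 := by
    have h1 : (∑ v ∈ S, (1:ℝ) * z v)^2 ≤ (∑ v ∈ S, (1:ℝ)^2) * ∑ v ∈ S, (z v)^2 :=
      Finset.sum_mul_sq_le_sq_mul_sq S _ _
    simp only [one_mul, one_pow, Finset.sum_const, nsmul_eq_mul, mul_one] at h1
    rw [hsum_zS] at h1
    refine h1.trans ?_
    rw [hScard]
    refine mul_le_mul_of_nonneg_left ?_ (by linarith)
    exact Finset.sum_le_sum_of_subset_of_nonneg (Finset.subset_univ S)
      (fun v _ _ => sq_nonneg _)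
  set y : Fin n → ℝ := fun v => z v - d * i / n with hy_def
  have hsum_y : ∑ v, y v = 0 := by
    simp only [hy_def, Finset.sum_sub_distrib, hsum_z, Finset.sum_const,
      Finset.card_univ, Fintype.card_fin, nsmul_eq_mul]
    field_simp
    ring
  have hz2 : ∑ v, (z v)^2 = d^2 * i^2 / n + ∑ v, (y v)^2 := by
    have hexp : ∀ v, (z v)^2 = (y v)^2 + 2*(d*i/n)*(y v) + (d*i/n)^2 := by
      intro v; rw [hy_def]; ring
    rw [Finset.sum_congr rfl fun v _ => hexp v]
    rw [Finset.sum_add_distrib, Finset.sum_add_distrib, ← Finset.mul_sum, hsum_y,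
      Finset.sum_const, Finset.card_univ, Fintype.card_fin, nsmul_eq_mul]
    field_simp
    ring
  set u' : Fin n → ℝ := fun v => u v - i / n with hu'_def
  have hu'sum : ∑ v, u' v = 0 := by
    simp only [hu'_def, Finset.sum_sub_distrib, hsum_u, Finset.sum_const,
      Finset.card_univ, Fintype.card_fin, nsmul_eq_mul]
    field_simp
    ring
  have hy_eq : ∀ v, y v = d * u' v - (lapM G *ᵥ u') v := by
    have hmv : lapM G *ᵥ u' = lapM G *ᵥ u := by
      have : u' = u - (i/n) • (fun _ => (1:ℝ)) := by
        funext v; simp [hu'_def]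
      rw [this, Matrix.mulVec_sub, Matrix.mulVec_smul, lapM_mulVec_one, smul_zero,
        sub_zero]
    intro v
    rw [hmv, hy_def, hz_def, hu'_def, hLu_def]
    ring
  have hu'2 : ∑ v, (u' v)^2 = i - i^2 / n := by
    have hexp : ∀ v, (u' v)^2 = (u v)^2 - 2*(i/n)*(u v) + (i/n)^2 := by
      intro v; rw [hu'_def]; ring
    rw [Finset.sum_congr rfl fun v _ => hexp v]
    rw [Finset.sum_add_distrib, Finset.sum_sub_distrib, ← Finset.mul_sum, hsum_u,
      hsum_u2, Finset.sum_const, Finset.card_univ, Fintype.card_fin, nsmul_eq_mul]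
    field_simp
    ring
  have hy2 : ∑ v, (y v)^2 ≤ θ^2 * (i - i^2/n) := by
    rw [Finset.sum_congr rfl fun v _ => congrArg (· ^ 2) (hy_eq v)]
    rw [← hu'2]
    exact specA G hlt hn.ne' u' hu'sum
  have combine : (d * i)^2 ≤ (i + m) * (d^2*i^2/n + θ^2*(i - i^2/n)) := by
    refine hCS.trans ?_
    refine mul_le_mul_of_nonneg_left ?_ (by linarith)
    rw [hz2]
    linarith [hy2]
  have hni : 0 < (n:ℝ) - i := by linarith
  have hip : 0 < i := by linarith
  have combine' : i * (d^2*i*n) ≤ i * ((i+m) * (d^2*i + θ^2*((n:ℝ)-i))) := by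
    have h1 := mul_le_mul_of_nonneg_right combine (le_of_lt hn)
    calc i * (d^2*i*n) = (d*i)^2 * n := by ring
      _ ≤ ((i+m) * (d^2*i^2/n + θ^2*(i - i^2/n))) * n := h1
      _ = i * ((i+m) * (d^2*i + θ^2*((n:ℝ)-i))) := by field_simp
  have key : d^2*i*n ≤ (i+m) * (d^2*i + θ^2*((n:ℝ)-i)) :=
    le_of_mul_le_mul_left combine' hip
  have hpos : 0 < θ^2 + d^2 * i / ((n:ℝ) - i) :=
    add_pos_of_nonneg_of_pos (sq_nonneg θ) (div_pos (mul_pos (pow_pos hd 2) hip) hni)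
  rw [div_mul_eq_mul_div, div_le_iff₀ hpos]
  rw [← mul_le_mul_iff_of_pos_right hni]
  have expand : m * (θ^2 + d^2*i/((n:ℝ)-i)) * ((n:ℝ)-i)
      = m * (θ^2*((n:ℝ)-i) + d^2*i) := by
    field_simp
    try ring
  rw [expand]
  nlinarith [key]
end

section
/- Let G be an (n,d,λ)-graph with λ < d. Then G is an h-expander, where h(1) = d and h(i) = (d² − λ²)/(λ² + d²·i/(n−i)) for 2 ≤ i ≤ ⌊n/2⌋; that is, every subset U of vertices with 1 ≤ |U| ≤ n/2 satisfies |N_G(U)| ≥ h(|U|)·|U|. -/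
open Matrix

-- The adjacency matrix of a graph, with real entries.
open Classical in
noncomputable def adjM {n : ℕ} (G : SimpleGraph (Fin n)) : Matrix (Fin n) (Fin n) ℝ :=
  G.adjMatrix ℝ

lemma rowsum {n d : ℕ} {G : SimpleGraph (Fin n)}
    (hreg : ∀ v : Fin n, (G.neighborSet v).ncard = d) (v : Fin n) :
    ∑ w, adjM G v w = (d : ℝ) := by
  classical
  have h1 : ∑ w, adjM G v w = ∑ w, (if G.Adj v w then (1:ℝ) else 0) := by
    apply Finset.sum_congr rfl; intro w _; simp [adjM, SimpleGraph.adjMatrix_apply]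
  rw [h1, Finset.sum_boole]
  have h2 : (Finset.univ.filter fun w => G.Adj v w) = G.neighborFinset v := by
    ext w; simp [SimpleGraph.mem_neighborFinset]
  rw [h2]
  have := hreg v
  rw [SimpleGraph.neighborFinset_def, ← Set.ncard_eq_toFinset_card'] at *
  rw [this]

lemma colsum {n d : ℕ} {G : SimpleGraph (Fin n)}
    (hreg : ∀ v : Fin n, (G.neighborSet v).ncard = d) (w : Fin n) :
    ∑ v, adjM G v w = (d : ℝ) := by
  have h : ∀ v, adjM G v w = adjM G w v := by
    intro v; simp only [adjM, SimpleGraph.adjMatrix_apply]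
    rw [SimpleGraph.adj_comm]
  simp_rw [h]; exact rowsum hreg w

variable {n d : ℕ} {lam : ℝ} {G : SimpleGraph (Fin n)}

-- the sum functional on EuclideanSpace
noncomputable def sumF (n : ℕ) : EuclideanSpace ℝ (Fin n) →ₗ[ℝ] ℝ where
  toFun x := ∑ v, x v
  map_add' x y := by simp [Finset.sum_add_distrib]
  map_smul' c x := by simp [Finset.mul_sum]

noncomputable def S0 (n : ℕ) : Submodule ℝ (EuclideanSpace ℝ (Fin n)) := LinearMap.ker (sumF n)

noncomputable def TA (G : SimpleGraph (Fin n)) :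
    EuclideanSpace ℝ (Fin n) →ₗ[ℝ] EuclideanSpace ℝ (Fin n) := Matrix.toEuclideanLin (adjM G)

lemma TA_apply (x : EuclideanSpace ℝ (Fin n)) : TA G x = adjM G *ᵥ x := rfl

lemma TA_symm : ∀ x y : EuclideanSpace ℝ (Fin n),
    inner (𝕜 := ℝ) (TA G x) y = inner (𝕜 := ℝ) x (TA G y) := by
  intro x y
  simp only [PiLp.inner_apply, RCLike.inner_apply, starRingEnd_apply, star_trivial]
  simp only [TA_apply, Matrix.mulVec, dotProduct]
  simp_rw [Finset.sum_mul, Finset.mul_sum]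
  rw [Finset.sum_comm]
  apply Finset.sum_congr rfl; intro v _
  apply Finset.sum_congr rfl; intro w _
  have : adjM G w v = adjM G v w := by
    simp only [adjM, SimpleGraph.adjMatrix_apply]; rw [SimpleGraph.adj_comm]
  rw [this]; ring

lemma TA_inv (hreg : ∀ v : Fin n, (G.neighborSet v).ncard = d) :
    ∀ x ∈ S0 n, TA G x ∈ S0 n := by
  intro x hx
  simp only [S0, LinearMap.mem_ker, sumF, LinearMap.coe_mk, AddHom.coe_mk] at *
  simp only [TA_apply, Matrix.mulVec, dotProduct]
  rw [Finset.sum_comm]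
  have : ∀ w, ∑ v, adjM G v w * x w = (d : ℝ) * x w := by
    intro w; rw [← Finset.sum_mul, colsum hreg]
  simp_rw [this, ← Finset.mul_sum, hx, mul_zero]

noncomputable def TAr (G : SimpleGraph (Fin n))
    (hinv : ∀ x ∈ S0 n, TA G x ∈ S0 n) : S0 n →ₗ[ℝ] S0 n :=
  (TA G).restrict hinv

lemma TAr_symm (hinv : ∀ x ∈ S0 n, TA G x ∈ S0 n) : (TAr G hinv).IsSymmetric := by
  intro x y
  have : ∀ a b : S0 n, inner (𝕜 := ℝ) a b = inner (𝕜 := ℝ) (a : EuclideanSpace ℝ (Fin n)) (b : EuclideanSpace ℝ (Fin n)) := fun a b => rfl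
  rw [this, this]
  have hx : ((TAr G hinv x : S0 n) : EuclideanSpace ℝ (Fin n)) = TA G x := rfl
  have hy : ((TAr G hinv y : S0 n) : EuclideanSpace ℝ (Fin n)) = TA G y := rfl
  rw [hx, hy, TA_symm]

lemma euclid_inner (x y : EuclideanSpace ℝ (Fin n)) :
    inner (𝕜 := ℝ) x y = ∑ v, x v * y v := by
  simp [PiLp.inner_apply, RCLike.inner_apply, mul_comm]

lemma spectral_bound (hreg : ∀ v : Fin n, (G.neighborSet v).ncard = d)
    (hlam : ∀ (σ : ℝ) (x : Fin n → ℝ), x ≠ 0 → (∑ v : Fin n, x v) = 0 →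
      adjM G *ᵥ x = σ • x → |σ| ≤ lam) (h0 : 0 ≤ lam) :
    ∀ g : Fin n → ℝ, (∑ v, g v) = 0 →
      ∑ v, ((adjM G *ᵥ g) v)^2 ≤ lam^2 * ∑ v, (g v)^2 := by
  intro g hg
  have hinv := TA_inv (d := d) hreg
  set m := Module.finrank ℝ (S0 n) with hm
  have hsym := TAr_symm (G := G) hinv
  set b := hsym.eigenvectorBasis hm.symm with hb
  set μ := hsym.eigenvalues hm.symm with hμ
  have heig : ∀ i, |μ i| ≤ lam := by
    intro i
    have hbi : (b i : EuclideanSpace ℝ (Fin n)) ≠ 0 := by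
      have := b.toBasis.ne_zero i
      simpa [Submodule.coe_eq_zero] using this
    have hsum : (∑ v, (b i : EuclideanSpace ℝ (Fin n)) v) = 0 := (b i).2
    have happ : TA G ((b i : EuclideanSpace ℝ (Fin n))) = μ i • (b i : EuclideanSpace ℝ (Fin n)) := by
      have := hsym.apply_eigenvectorBasis hm.symm i
      have h2 : ((TAr G hinv (b i) : S0 n) : EuclideanSpace ℝ (Fin n)) = TA G (b i) := rfl
      rw [← h2, this]; rfl
    exact hlam (μ i) (b i) (by simpa using hbi) hsum (congrArg WithLp.ofLp happ)
  -- work in S0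
  set g' : S0 n := ⟨WithLp.toLp 2 g, hg⟩ with hg'
  have key : inner (𝕜 := ℝ) (TAr G hinv g') (TAr G hinv g') ≤ lam^2 * inner (𝕜 := ℝ) g' g' := by
    rw [← b.repr.inner_map_map (TAr G hinv g') (TAr G hinv g'),
        ← b.repr.inner_map_map g' g']
    rw [euclid_inner, euclid_inner]
    have hrepr : ∀ i, b.repr (TAr G hinv g') i = μ i * b.repr g' i := fun i =>
      hsym.eigenvectorBasis_apply_self_apply hm.symm g' i
    rw [Finset.mul_sum]
    apply Finset.sum_le_sum
    intro i _
    rw [hrepr]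
    have hsq : (μ i)^2 ≤ lam^2 := by
      rw [← sq_abs (μ i)]
      exact pow_le_pow_left₀ (abs_nonneg _) (heig i) 2
    nlinarith [sq_nonneg (b.repr g' i), sq_nonneg (μ i * b.repr g' i)]
  have h1 : (inner (𝕜 := ℝ) (TAr G hinv g') (TAr G hinv g') : ℝ) = ∑ v, ((adjM G *ᵥ g) v)^2 := by
    have he := euclid_inner (n := n) ((TAr G hinv g' : S0 n) : EuclideanSpace ℝ (Fin n)) ((TAr G hinv g' : S0 n) : EuclideanSpace ℝ (Fin n))
    rw [show (inner (𝕜 := ℝ) (TAr G hinv g') (TAr G hinv g') : ℝ)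
        = inner (𝕜 := ℝ) ((TAr G hinv g' : S0 n) : EuclideanSpace ℝ (Fin n)) ((TAr G hinv g' : S0 n) : EuclideanSpace ℝ (Fin n)) from rfl, he]
    apply Finset.sum_congr rfl; intro v _
    rw [pow_two]; rfl
  have h2 : (inner (𝕜 := ℝ) g' g' : ℝ) = ∑ v, (g v)^2 := by
    have he := euclid_inner (n := n) ((g' : S0 n) : EuclideanSpace ℝ (Fin n)) ((g' : S0 n) : EuclideanSpace ℝ (Fin n))
    rw [show (inner (𝕜 := ℝ) g' g' : ℝ)
        = inner (𝕜 := ℝ) ((g' : S0 n) : EuclideanSpace ℝ (Fin n)) ((g' : S0 n) : EuclideanSpace ℝ (Fin n)) from rfl, he]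
    apply Finset.sum_congr rfl; intro v _
    rw [pow_two]
  rw [h1, h2] at key
  exact key

lemma bilinear_bound (hreg : ∀ v : Fin n, (G.neighborSet v).ncard = d)
    (hlam : ∀ (σ : ℝ) (x : Fin n → ℝ), x ≠ 0 → (∑ v : Fin n, x v) = 0 →
      adjM G *ᵥ x = σ • x → |σ| ≤ lam) (h0 : 0 ≤ lam)
    (f g : Fin n → ℝ) (hf : (∑ v, f v) = 0) (hg : (∑ v, g v) = 0) :
    (∑ v, f v * (adjM G *ᵥ g) v)^2 ≤ lam^2 * (∑ v, (f v)^2) * (∑ v, (g v)^2) := by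
  have cs := Finset.sum_mul_sq_le_sq_mul_sq Finset.univ f (fun v => (adjM G *ᵥ g) v)
  have sp := spectral_bound hreg hlam h0 g hg
  have hf2 : (0:ℝ) ≤ ∑ v, (f v)^2 := Finset.sum_nonneg fun v _ => sq_nonneg _
  nlinarith [cs, sp, hf2]

open Classical in
lemma sum_ind (S : Set (Fin n)) : ∑ v, (if v ∈ S then (1:ℝ) else 0) = (S.ncard : ℝ) := by
  classical
  rw [Finset.sum_boole, Set.ncard_eq_toFinset_card' S]
  norm_cast
  rw [Set.filter_mem_univ_eq_toFinset]

open Classical in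
lemma mixing (hreg : ∀ v : Fin n, (G.neighborSet v).ncard = d)
    (hlam : ∀ (σ : ℝ) (x : Fin n → ℝ), x ≠ 0 → (∑ v : Fin n, x v) = 0 →
      adjM G *ᵥ x = σ • x → |σ| ≤ lam) (h0 : 0 ≤ lam) (hn : 0 < n) (U : Set (Fin n)) :
    ((d:ℝ) * (U.ncard:ℝ) * ((((U ∪ nbhd G U)ᶜ : Set (Fin n)).ncard:ℝ)))^2 ≤
      lam^2 * ((U.ncard:ℝ) * ((n:ℝ) - (U.ncard:ℝ))) *
        (((((U ∪ nbhd G U)ᶜ : Set (Fin n)).ncard:ℝ)) * ((n:ℝ) - ((((U ∪ nbhd G U)ᶜ : Set (Fin n)).ncard:ℝ)))) := by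
  classical
  set W : Set (Fin n) := (U ∪ nbhd G U)ᶜ with hW
  set u : ℝ := (U.ncard : ℝ) with hu
  set wb : ℝ := (W.ncard : ℝ) with hwb
  have hnR : (0:ℝ) < n := by exact_mod_cast hn
  set χU : Fin n → ℝ := fun v => if v ∈ U then 1 else 0 with hχU
  set χW : Fin n → ℝ := fun v => if v ∈ W then 1 else 0 with hχW
  set f : Fin n → ℝ := fun v => χU v - u/n with hf
  set g : Fin n → ℝ := fun v => χW v - wb/n with hg
  have hχUsum : ∑ v, χU v = u := by
    rw [hχU, hu]; convert sum_ind U using 3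
  have hχWsum : ∑ v, χW v = wb := by
    rw [hχW, hwb]; convert sum_ind W using 3
  have hfsum : (∑ v, f v) = 0 := by
    simp only [hf, Finset.sum_sub_distrib, hχUsum, Finset.sum_const, Finset.card_univ,
      Fintype.card_fin, nsmul_eq_mul]
    field_simp
    ring
  have hgsum : (∑ v, g v) = 0 := by
    simp only [hg, Finset.sum_sub_distrib, hχWsum, Finset.sum_const, Finset.card_univ,
      Fintype.card_fin, nsmul_eq_mul]
    field_simp
    ring
  -- no edges between U and W
  have hA0 : ∀ v w : Fin n, χU v * adjM G v w * χW w = 0 := by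
    intro v w
    by_cases hv : v ∈ U
    · by_cases hw : w ∈ W
      · have hadj : ¬ G.Adj v w := by
          intro hadj
          have hwU : w ∉ U := fun h => hw (by simp [hW]; exact Or.inl h)
          have : w ∈ nbhd G U := ⟨hwU, v, hv, hadj⟩
          exact hw (by simp [hW]; exact Or.inr this)
        simp [adjM, SimpleGraph.adjMatrix_apply, hadj]
      · simp [hχW, hw]
    · simp [hχU, hv]
  have S2 : ∑ v, ∑ w, χU v * adjM G v w = d * u := by
    have h1 : ∀ v : Fin n, ∑ w, χU v * adjM G v w = χU v * d := by
      intro v; rw [← Finset.mul_sum, rowsum hreg]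
    simp_rw [h1, ← Finset.sum_mul, hχUsum]; ring
  have S3 : ∑ v, ∑ w, adjM G v w * χW w = d * wb := by
    rw [Finset.sum_comm]
    have h1 : ∀ w : Fin n, ∑ v, adjM G v w * χW w = (d:ℝ) * χW w := by
      intro w; rw [← Finset.sum_mul, colsum hreg]
    simp_rw [h1, ← Finset.mul_sum, hχWsum]
  have S4 : ∑ v : Fin n, ∑ w, adjM G v w = n * d := by
    simp_rw [rowsum hreg]
    simp [Finset.sum_const, Finset.card_univ, mul_comm]
  -- the quadratic form value
  have hQ : ∑ v, f v * (adjM G *ᵥ g) v = -(d * u * wb / n) := by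
    have hmv : ∀ v, (adjM G *ᵥ g) v = ∑ w, adjM G v w * g w := fun v => rfl
    have hpt : ∀ v, f v * (adjM G *ᵥ g) v =
        (∑ w, χU v * adjM G v w * χW w) - (wb/n) * (∑ w, χU v * adjM G v w)
          - (u/n) * (∑ w, adjM G v w * χW w) + (u/n)*(wb/n) * (∑ w, adjM G v w) := by
      intro v
      calc f v * (adjM G *ᵥ g) v
          = ∑ w, (χU v * adjM G v w * χW w - wb/n*(χU v * adjM G v w)
              - u/n*(adjM G v w * χW w) + u/n*(wb/n)*(adjM G v w)) := by
            rw [hmv, Finset.mul_sum]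
            apply Finset.sum_congr rfl; intro w _
            simp only [hf, hg]; ring
        _ = _ := by
            rw [Finset.sum_add_distrib, Finset.sum_sub_distrib, Finset.sum_sub_distrib]
            simp only [← Finset.mul_sum]
    simp_rw [hpt]
    rw [Finset.sum_add_distrib, Finset.sum_sub_distrib, Finset.sum_sub_distrib,
      ← Finset.mul_sum, ← Finset.mul_sum, ← Finset.mul_sum, S2, S3, S4]
    have : ∑ v, ∑ w, χU v * adjM G v w * χW w = 0 :=
      Finset.sum_eq_zero fun v _ => Finset.sum_eq_zero fun w _ => hA0 v w
    rw [this]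
    field_simp
    ring
  have hf2 : ∑ v, (f v)^2 = u * (n - u) / n := by
    have hpt : ∀ v, (f v)^2 = χU v - 2*(u/n)*χU v + (u/n)^2 := by
      intro v; by_cases h : v ∈ U <;> simp [hf, hχU, h] <;> ring
    simp_rw [hpt]
    rw [Finset.sum_add_distrib, Finset.sum_sub_distrib, ← Finset.mul_sum, hχUsum,
      Finset.sum_const, Finset.card_univ, Fintype.card_fin, nsmul_eq_mul]
    field_simp
    ring
  have hg2 : ∑ v, (g v)^2 = wb * (n - wb) / n := by
    have hpt : ∀ v, (g v)^2 = χW v - 2*(wb/n)*χW v + (wb/n)^2 := by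
      intro v; by_cases h : v ∈ W <;> simp [hg, hχW, h] <;> ring
    simp_rw [hpt]
    rw [Finset.sum_add_distrib, Finset.sum_sub_distrib, ← Finset.mul_sum, hχWsum,
      Finset.sum_const, Finset.card_univ, Fintype.card_fin, nsmul_eq_mul]
    field_simp
    ring
  have hcs := bilinear_bound hreg hlam h0 f g hfsum hgsum
  rw [hQ, hf2, hg2] at hcs
  have hn2 : (0:ℝ) < (n:ℝ)^2 := by positivity
  have h2 := mul_le_mul_of_nonneg_right hcs hn2.le
  calc ((d:ℝ) * u * wb)^2 = (-(d * u * wb / n))^2 * (n:ℝ)^2 := by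
        field_simp
      _ ≤ (lam^2 * (u * (n - u) / n) * (wb * (n - wb) / n)) * (n:ℝ)^2 := h2
      _ = lam^2 * (u * (n - u)) * (wb * (n - wb)) := by
        field_simp
        try ring
        try exact Or.inl trivial


-- An `(n,d,λ)`-graph: a `d`-regular graph on `n` vertices all of whose adjacency
-- eigenvalues besides the top eigenvalue `d` (whose eigenvector is the all-ones vector)
-- are at most `λ` in absolute value; equivalently, every eigenvalue admitting an
-- eigenvector orthogonal to the all-ones vector is at most `λ` in absolute value.
noncomputable def IsNdLambdaGraph (n d : ℕ) (lam : ℝ) (G : SimpleGraph (Fin n)) : Prop :=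
  (∀ v : Fin n, (G.neighborSet v).ncard = d) ∧
  ∀ (σ : ℝ) (x : Fin n → ℝ), x ≠ 0 → (∑ v : Fin n, x v) = 0 →
    adjM G *ᵥ x = σ • x → |σ| ≤ lam

set_option maxHeartbeats 1000000 in
theorem ndlambda_expansion
    (n d : ℕ) (lam : ℝ) (G : SimpleGraph (Fin n))
    (hG : IsNdLambdaGraph n d lam G) (h0 : 0 ≤ lam) (hlt : lam < (d : ℝ)) :
    ∀ U : Set (Fin n), U.Nonempty → (U.ncard : ℝ) ≤ (n : ℝ) / 2 →
      (if U.ncard = 1 then (d : ℝ)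
        else ((d : ℝ) ^ 2 - lam ^ 2) /
          (lam ^ 2 + (d : ℝ) ^ 2 * (U.ncard : ℝ) / ((n : ℝ) - (U.ncard : ℝ))))
        * (U.ncard : ℝ) ≤ ((nbhd G U).ncard : ℝ) := by
  intro U hUne hUle
  classical
  obtain ⟨v0, hv0⟩ := hUne
  have hn : 0 < n := v0.pos
  have hnR : (0:ℝ) < n := by exact_mod_cast hn
  set N : Set (Fin n) := nbhd G U with hN
  set W : Set (Fin n) := (U ∪ N)ᶜ with hW
  set u : ℝ := (U.ncard : ℝ) with hu
  set m : ℝ := (N.ncard : ℝ) with hm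
  set wb : ℝ := (W.ncard : ℝ) with hwb
  have hd : (0:ℝ) < d := lt_of_le_of_lt h0 hlt
  have hdisj : Disjoint U N := by
    rw [Set.disjoint_left]
    intro a ha haN
    exact haN.1 ha
  have hpart : U.ncard + N.ncard + W.ncard = n := by
    have h1 : (U ∪ N).ncard = U.ncard + N.ncard :=
      Set.ncard_union_eq hdisj (Set.toFinite _) (Set.toFinite _)
    have h2 := Set.ncard_add_ncard_compl (U ∪ N) (Set.toFinite _) (Set.toFinite _)
    rw [h1] at h2
    simpa only [Nat.card_eq_fintype_card, Fintype.card_fin] using h2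
  have hureal : u + m + wb = (n:ℝ) := by rw [hu, hm, hwb]; exact_mod_cast hpart
  have hupos : 0 < U.ncard := (Set.ncard_pos (Set.toFinite _)).mpr ⟨v0, hv0⟩
  have hu6 : 1 ≤ U.ncard := hupos
  have hu1 : (1:ℝ) ≤ u := by rw [hu]; exact_mod_cast hu6
  have hupos' : (0:ℝ) < u := by linarith
  have hnu : (0:ℝ) < (n:ℝ) - u := by
    have : (2:ℝ) ≤ n := by linarith [hUle]
    linarith [hUle]
  have hm0 : (0:ℝ) ≤ m := by rw [hm]; positivity
  have hwb0 : (0:ℝ) ≤ wb := by rw [hwb]; positivity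
  have hmix := mixing hG.1 hG.2 h0 hn U
  rw [← hN, ← hW, ← hu, ← hwb] at hmix
  have h3 : (d:ℝ)^2*u*wb ≤ lam^2*((n:ℝ)-u)*((n:ℝ)-wb) := by
    rcases hwb0.eq_or_lt with heq | hwbpos
    · rw [← heq]
      have h7 : (0:ℝ) ≤ lam^2*((n:ℝ)-u)*((n:ℝ)-0) :=
        mul_nonneg (mul_nonneg (sq_nonneg lam) hnu.le) (by linarith)
      linarith [h7]
    · have hcan : (0:ℝ) < u * wb := mul_pos hupos' hwbpos
      nlinarith [hmix, hcan]
  have hwbeq : wb = (n:ℝ) - u - m := by linarith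
  rw [hwbeq] at h3
  have KEY : u*((n:ℝ)-u)*((d:ℝ)^2-lam^2) ≤ m*(lam^2*((n:ℝ)-u)+(d:ℝ)^2*u) := by
    nlinarith [h3]
  by_cases hone : U.ncard = 1
  · rw [if_pos hone]
    obtain ⟨a, ha⟩ := Set.ncard_eq_one.mp hone
    have hNa : N = G.neighborSet a := by
      rw [hN, ha]
      ext v
      simp only [nbhd, Set.mem_setOf_eq, Set.mem_singleton_iff, SimpleGraph.mem_neighborSet]
      constructor
      · rintro ⟨-, x, rfl, hadj⟩
        exact hadj
      · intro h
        exact ⟨fun hv => G.ne_of_adj h hv.symm, a, rfl, h⟩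
    have hmd : m = (d:ℝ) := by rw [hm, hNa, hG.1 a]
    have hu1' : u = 1 := by rw [hu, hone]; norm_num
    rw [hu1', mul_one, hmd]
  · rw [if_neg hone]
    have hden : (0:ℝ) < lam^2 + (d:ℝ)^2*u/((n:ℝ)-u) := by
      have h4 : (0:ℝ) < (d:ℝ)^2*u := by positivity
      have h5 := div_pos h4 hnu
      nlinarith [sq_nonneg lam]
    rw [div_mul_eq_mul_div, div_le_iff₀ hden]
    have hrw : m*(lam^2+(d:ℝ)^2*u/((n:ℝ)-u)) = (m*(lam^2*((n:ℝ)-u)+(d:ℝ)^2*u))/((n:ℝ)-u) := by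
      field_simp
    rw [hrw, le_div_iff₀ hnu]
    nlinarith [KEY]
end
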